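/- arXiv:1012.5901 — 5 statements merged into one kernel-verified Lean document; each statement's English description precedes it below -/
import Mathlib

section
/- Theorem 1: Let 1 < p ≤ 2. If f belongs to the intersection of the Besov-type spaces B^{p,1}_{2(α+1)/p, α} and B^{p,1}_{3/p, α} on the Jacobi hypergroup, then 𝓕(f) ∈ L¹_c(ℝ₊), i.e. ∫₀^∞ |𝓕(f)(t)| dt/|c(t)|² < ∞. -/
open MeasureTheory Set Filter

/-- The `L^p` norm on `(0,∞)` with respect to the weighted measure `w(x) dx`. -/
noncomputable def wLpNorm (w : ℝ → ℝ) (p : ℝ) (f : ℝ → ℂ) : ℝ :=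
  (∫ x in Set.Ioi (0 : ℝ), ‖f x‖ ^ p * w x) ^ (1 / p)

/-- Membership in `L^p((0,∞), w(x) dx)`. -/
def MemW (w : ℝ → ℝ) (p : ℝ) (f : ℝ → ℂ) : Prop :=
  AEMeasurable f (volume.restrict (Set.Ioi (0 : ℝ))) ∧
    IntegrableOn (fun x => ‖f x‖ ^ p * w x) (Set.Ioi (0 : ℝ))

/-- The Jacobi hypergroup setting: the Chébli–Trimèche hypergroup `(ℝ₊, ∗(A))` with
`A(x) = 2^(2ρ) (sinh x)^(2α+1) (cosh x)^(2β+1)`, `α ≥ β ≥ -1/2`, `α ≠ -1/2`,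
`ρ = α + β + 1`.  Its characters are the Jacobi functions `φ_λ`, satisfying
`|1 - φ_λ(t)| ≥ c₀ min{1, (λt)²}`.  The density `cden = |c(λ)|⁻²` is even, continuous
and comparable to `|λ|^(2α+1)` for `|λ| > k` and to `|λ|²` for `|λ| ≤ k`.  The
generalized Fourier transform `FT` is given on `L¹_A` by
`𝓕(f)(λ) = ∫₀^∞ f(x) φ_λ(x) A(x) dx`; it satisfies `‖𝓕 f‖_∞ ≤ ‖f‖_{A,1}`, the
Hausdorff–Young inequality, the Hardy–Littlewood inequality of Lemma 1 and the
translation identity `𝓕(τ_δ f)(λ) = φ_λ(δ) 𝓕(f)(λ)`, where the generalized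
translations `τ_δ` are `L^p_A`-contractions. -/
structure JacobiHypergroup where
  α : ℝ
  β : ℝ
  ρ : ℝ
  hβα : β ≤ α
  hβ : -(1/2) ≤ β
  hα : α ≠ -(1/2)
  hρ : ρ = α + β + 1
  /-- the weight function `A` of the Jacobi hypergroup -/
  A : ℝ → ℝ
  hA : ∀ x : ℝ, 0 ≤ x →
    A x = (2 : ℝ) ^ (2 * ρ) * Real.sinh x ^ (2 * α + 1) * Real.cosh x ^ (2 * β + 1)
  /-- the Jacobi functions `φ_λ`, the characters of the hypergroup -/
  φ : ℝ → ℝ → ℂ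
  c₀ : ℝ
  hc₀ : 0 < c₀
  hφ_lower : ∀ lam t : ℝ, 0 < t →
    c₀ * min 1 ((lam * t) ^ 2) ≤ ‖1 - φ lam t‖
  /-- the density `|c(λ)|⁻²` of the Plancherel measure -/
  cden : ℝ → ℝ
  hcden_cont : Continuous cden
  hcden_even : ∀ x : ℝ, cden (-x) = cden x
  k : ℝ
  k₁ : ℝ
  k₂ : ℝ
  hk : 0 < k
  hk₁ : 0 < k₁
  hk₂ : 0 < k₂
  hcden_hi : ∀ x : ℝ, k < |x| →
    k₁ * |x| ^ (2 * α + 1) ≤ cden x ∧ cden x ≤ k₂ * |x| ^ (2 * α + 1)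
  hcden_lo : ∀ x : ℝ, |x| ≤ k →
    k₁ * |x| ^ (2 : ℝ) ≤ cden x ∧ cden x ≤ k₂ * |x| ^ (2 : ℝ)
  /-- the generalized Fourier transform -/
  FT : (ℝ → ℂ) → ℝ → ℂ
  hFT_def : ∀ f : ℝ → ℂ, MemW A 1 f → ∀ lam : ℝ,
    FT f lam = ∫ x in Set.Ioi (0 : ℝ), f x * φ lam x * (A x : ℂ)
  hFT_meas : ∀ f : ℝ → ℂ, Measurable (FT f)
  hFT_sub : ∀ f g : ℝ → ℂ, ∀ lam : ℝ,
    FT (fun y => f y - g y) lam = FT f lam - FT g lam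
  /-- `‖𝓕 f‖_∞ ≤ ‖f‖_{A,1}` -/
  hFT_sup : ∀ f : ℝ → ℂ, MemW A 1 f → ∀ lam : ℝ,
    ‖FT f lam‖ ≤ wLpNorm A 1 f
  /-- the Hausdorff–Young inequality `‖𝓕 f‖_{c,p'} ≤ C ‖f‖_{A,p}` -/
  hHY : ∀ p p' : ℝ, 1 < p → p ≤ 2 → 1 / p + 1 / p' = 1 →
    ∃ C > (0 : ℝ), ∀ f : ℝ → ℂ, MemW A p f →
      (∫⁻ lam in Set.Ioi (0 : ℝ),
          ENNReal.ofReal (‖FT f lam‖ ^ p' * cden lam)) ^ (1 / p')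
        ≤ ENNReal.ofReal (C * wLpNorm A p f)
  /-- the Hardy–Littlewood inequality of Lemma 1 (with the piecewise weight
  `g(t) = t³` for `t ≤ k`, `g(t) = t^(2(α+1))` for `t > k`) -/
  hHL : ∀ p : ℝ, 1 < p → p ≤ 2 →
    ∃ C > (0 : ℝ), ∀ f : ℝ → ℂ, MemW A p f →
      ∫⁻ x in Set.Ioi (0 : ℝ),
          ENNReal.ofReal ((if x ≤ k then x ^ (3 : ℝ) else x ^ (2 * (α + 1))) ^ (p - 2) *
            ‖FT f x‖ ^ p * cden x)
        ≤ ENNReal.ofReal (C * wLpNorm A p f ^ p)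
  /-- the generalized translation operators -/
  τ : ℝ → (ℝ → ℂ) → ℝ → ℂ
  hτ_contract : ∀ p : ℝ, 1 ≤ p → ∀ (δ : ℝ) (f : ℝ → ℂ), MemW A p f →
    MemW A p (τ δ f) ∧ wLpNorm A p (τ δ f) ≤ wLpNorm A p f
  hτ_diff : ∀ p : ℝ, 1 ≤ p → ∀ (δ : ℝ) (f : ℝ → ℂ), MemW A p f →
    MemW A p (fun y => τ δ f y - f y)
  /-- the translation identity `𝓕(τ_δ f)(λ) = φ_λ(δ) 𝓕(f)(λ)` -/
  hτ_FT : ∀ p : ℝ, 1 ≤ p → p ≤ 2 → ∀ (δ : ℝ) (f : ℝ → ℂ), MemW A p f →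
    ∀ᵐ lam ∂(volume.restrict (Set.Ioi (0 : ℝ))),
      FT (τ δ f) lam = φ lam δ * FT f lam

/-- The modulus of continuity of first order, `ω_{A,p}(f)(δ) = ‖τ_δ f - f‖_{A,p}`. -/
noncomputable def JacobiHypergroup.omega (S : JacobiHypergroup) (p : ℝ)
    (f : ℝ → ℂ) (δ : ℝ) : ℝ :=
  wLpNorm S.A p (fun y => S.τ δ f y - f y)


section JacobiAux

open ENNReal

lemma jh_alpha_pos (S : JacobiHypergroup) : 0 < 2 * S.α + 1 := by
  have h1 : -(1/2 : ℝ) ≤ S.α := le_trans S.hβ S.hβα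
  have h2 : -(1/2 : ℝ) < S.α := lt_of_le_of_ne h1 (Ne.symm S.hα)
  linarith

lemma jh_cden_nonneg (S : JacobiHypergroup) (x : ℝ) : 0 ≤ S.cden x := by
  rcases le_or_gt |x| S.k with h | h
  · exact le_trans (mul_nonneg S.hk₁.le (Real.rpow_nonneg (abs_nonneg x) _)) (S.hcden_lo x h).1
  · exact le_trans (mul_nonneg S.hk₁.le (Real.rpow_nonneg (abs_nonneg x) _)) (S.hcden_hi x h).1

lemma jh_A_nonneg (S : JacobiHypergroup) (x : ℝ) (hx : 0 ≤ x) : 0 ≤ S.A x := by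
  rw [S.hA x hx]
  have h1 : (0:ℝ) ≤ Real.sinh x := Real.sinh_nonneg_iff.mpr hx
  have h2 : (0:ℝ) ≤ Real.cosh x := (Real.cosh_pos x).le
  exact mul_nonneg (mul_nonneg (Real.rpow_nonneg (by norm_num) _) (Real.rpow_nonneg h1 _))
    (Real.rpow_nonneg h2 _)

lemma jh_wLp_nonneg (S : JacobiHypergroup) (p : ℝ) (f : ℝ → ℂ) : 0 ≤ wLpNorm S.A p f := by
  apply Real.rpow_nonneg
  apply MeasureTheory.setIntegral_nonneg measurableSet_Ioi
  intro x hx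
  exact mul_nonneg (Real.rpow_nonneg (norm_nonneg _) _) (jh_A_nonneg S x (le_of_lt hx))

lemma jh_omega_nonneg (S : JacobiHypergroup) (p : ℝ) (f : ℝ → ℂ) (δ : ℝ) :
    0 ≤ S.omega p f δ :=
  jh_wLp_nonneg S p _

lemma jh_Ioc_disj {a b c d : ℝ} (h : b ≤ c) : Disjoint (Set.Ioc a b) (Set.Ioc c d) := by
  rw [Set.disjoint_left]
  rintro x ⟨_, h2⟩ ⟨h3, _⟩
  linarith

lemma jh_tsum_le (F : ℝ → ℝ≥0∞) (I : ℕ → Set ℝ) (hmeas : ∀ n, MeasurableSet (I n))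
    (hdisj : Pairwise (Function.onFun Disjoint I)) (hsub : ∀ n, I n ⊆ Set.Ioi (0:ℝ)) :
    ∑' n, ∫⁻ x in I n, F x ≤ ∫⁻ x in Set.Ioi (0:ℝ), F x := by
  rw [← lintegral_sum_measure]
  rw [← Measure.restrict_iUnion hdisj hmeas]
  exact lintegral_mono_set (Set.iUnion_subset hsub)

end JacobiAux

section JacobiShell

open ENNReal

lemma jh_shell_est (S : JacobiHypergroup) (p q : ℝ) (hp : 1 < p) (hp2 : p ≤ 2)
    (hq : q = p / (p - 1))
    (C : ℝ) (hC : 0 < C)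
    (hHLC : ∀ g : ℝ → ℂ, MemW S.A p g →
      ∫⁻ x in Set.Ioi (0 : ℝ),
          ENNReal.ofReal ((if x ≤ S.k then x ^ (3 : ℝ) else x ^ (2 * (S.α + 1))) ^ (p - 2) *
            ‖S.FT g x‖ ^ p * S.cden x)
        ≤ ENNReal.ofReal (C * wLpNorm S.A p g ^ p))
    (f : ℝ → ℂ) (hf : MemW S.A p f)
    (a b γ : ℝ) (hab : b + 1 = a) (hb : 0 < b) (hγ : γ = a / p)
    (t : ℝ) (ht : 0 < t)
    (hwt : ∀ x ∈ Set.Ioc t (2 * t),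
      (if x ≤ S.k then x ^ (3 : ℝ) else x ^ (2 * (S.α + 1))) = x ^ a)
    (hcd : ∀ x ∈ Set.Ioc t (2 * t), S.cden x ≤ S.k₂ * x ^ b)
    (δ : ℝ) (hδ : δ ∈ Set.Ioc (1 / t) (2 / t)) :
    ∫⁻ x in Set.Ioc t (2 * t), ENNReal.ofReal (‖S.FT f x‖ * S.cden x)
      ≤ ENNReal.ofReal
          ((S.c₀⁻¹ * C ^ (1 / p) * S.k₂ ^ (1 / q) * 2 ^ (b / q + a * (2 - p) / p) * 2 ^ γ * 2)
            * t⁻¹ * (S.omega p f δ / δ ^ γ / δ)) := by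
  have hp0 : (0:ℝ) < p := lt_trans one_pos hp
  have hp0' : p ≠ 0 := ne_of_gt hp0
  have hp1 : (0:ℝ) < p - 1 := by linarith
  have hq0 : 0 < q := by rw [hq]; positivity
  have hq0' : q ≠ 0 := ne_of_gt hq0
  have hpq : p.HolderConjugate q := (Real.holderConjugate_iff_eq_conjExponent hp).mpr hq
  have hsum : 1/p + 1/q = 1 := by rw [one_div, one_div]; exact hpq.inv_add_inv_eq_one
  have ha : 0 < a := by linarith
  have hγ0 : 0 ≤ γ := by rw [hγ]; exact div_nonneg ha.le hp0.le
  have hδ0 : 0 < δ := lt_trans (by positivity) hδ.1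
  have h2t : (0:ℝ) < 2 * t := by linarith
  have hsub : Set.Ioc t (2 * t) ⊆ Set.Ioi (0:ℝ) := fun x hx => lt_trans ht hx.1
  set g : ℝ → ℂ := fun y => S.τ δ f y - f y with hgdef
  have hgmem : MemW S.A p g := S.hτ_diff p hp.le δ f hf
  have hωeq : S.omega p f δ = wLpNorm S.A p g := rfl
  have hω0 : 0 ≤ S.omega p f δ := jh_omega_nonneg S p f δ
  set ω := S.omega p f δ with hωdef
  set γexp := b / q + a * (2 - p) / p with hEdef
  set F := ω / δ ^ γ / δ with hFdef
  -- key a.e. lower bound on the shell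
  have hkey : ∀ᵐ x ∂(volume.restrict (Set.Ioc t (2 * t))),
      S.c₀ * ‖S.FT f x‖ ≤ ‖S.FT g x‖ := by
    filter_upwards [ae_restrict_of_ae_restrict_of_subset hsub
      (S.hτ_FT p hp.le hp2 δ f hf), ae_restrict_mem measurableSet_Ioc] with x hx hmem
    have h1 : S.FT g x = (S.φ x δ - 1) * S.FT f x := by
      rw [hgdef]
      rw [S.hFT_sub (S.τ δ f) f x, hx]
      ring
    have habs : ‖S.FT g x‖ = ‖1 - S.φ x δ‖ * ‖S.FT f x‖ := by
      rw [h1, norm_mul, norm_sub_rev]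
    have h3 : t * (1/t) = 1 := by field_simp
    have h5 : t * (1/t) < x * δ :=
      mul_lt_mul'' hmem.1 hδ.1 ht.le (by positivity)
    have hxδ : 1 ≤ x * δ := by rw [h3] at h5; linarith
    have hmin : min 1 ((x * δ)^2) = 1 := min_eq_left (by nlinarith)
    have h4 := S.hφ_lower x δ hδ0
    rw [hmin, mul_one] at h4
    rw [habs]
    exact mul_le_mul_of_nonneg_right h4 (norm_nonneg _)
  -- Bt bound
  set Bt := S.k₂ ^ (1/q) * (2*t) ^ γexp with hBtdef
  have hBt0 : 0 ≤ Bt := mul_nonneg (Real.rpow_nonneg S.hk₂.le _) (Real.rpow_nonneg h2t.le _)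
  set G : ℝ → ℝ≥0∞ := fun x =>
    ENNReal.ofReal ((x ^ a) ^ (p - 2) * ‖S.FT f x‖ ^ p * S.cden x) with hGdef
  have hmFT : Measurable fun x => ‖S.FT f x‖ :=
    continuous_norm.measurable.comp (S.hFT_meas f)
  have hGmeas : Measurable G := by
    have h1 : Measurable fun x : ℝ => (x ^ a) ^ (p - 2) :=
      (measurable_id.pow measurable_const).pow measurable_const
    have h2 : Measurable fun x : ℝ => ‖S.FT f x‖ ^ p :=
      hmFT.pow measurable_const
    exact ((h1.mul h2).mul S.hcden_cont.measurable).ennreal_ofReal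
  -- pointwise Hölder split
  have hpt : ∀ x ∈ Set.Ioc t (2 * t),
      ENNReal.ofReal (‖S.FT f x‖ * S.cden x) ≤ G x ^ (1/p) * ENNReal.ofReal Bt := by
    intro x hx
    have hx0 : 0 < x := lt_trans ht hx.1
    have hc0 : 0 ≤ S.cden x := jh_cden_nonneg S x
    have hu0 : 0 ≤ ‖S.FT f x‖ := norm_nonneg _
    have hxa0 : 0 < x ^ a := Real.rpow_pos_of_pos hx0 a
    set u := ‖S.FT f x‖ with hudef
    set c := S.cden x with hcdef
    have key : c ^ (1/q) * x ^ (a * (2 - p) / p) ≤ Bt := by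
      have hbq0 : 0 ≤ b / q := div_nonneg hb.le hq0.le
      have hap0 : 0 ≤ a * (2 - p) / p := div_nonneg (mul_nonneg ha.le (by linarith)) hp0.le
      have e1 : c ^ (1/q) ≤ S.k₂ ^ (1/q) * x ^ (b / q) := by
        calc c ^ (1/q) ≤ (S.k₂ * x ^ b) ^ (1/q) :=
              Real.rpow_le_rpow hc0 (hcd x hx) (by positivity)
          _ = S.k₂ ^ (1/q) * x ^ (b / q) := by
              rw [Real.mul_rpow S.hk₂.le (Real.rpow_nonneg hx0.le _), ← Real.rpow_mul hx0.le,
                mul_one_div]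
      have e2 : x ^ (b / q) ≤ (2*t) ^ (b / q) := Real.rpow_le_rpow hx0.le hx.2 hbq0
      have e3 : x ^ (a * (2 - p) / p) ≤ (2*t) ^ (a * (2 - p) / p) :=
        Real.rpow_le_rpow hx0.le hx.2 hap0
      calc c ^ (1/q) * x ^ (a * (2 - p) / p)
          ≤ (S.k₂ ^ (1/q) * (2*t) ^ (b / q)) * (2*t) ^ (a * (2 - p) / p) := by
            apply mul_le_mul _ e3 (Real.rpow_nonneg hx0.le _)
              (mul_nonneg (Real.rpow_nonneg S.hk₂.le _) (Real.rpow_nonneg h2t.le _))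
            exact e1.trans (mul_le_mul_of_nonneg_left e2 (Real.rpow_nonneg S.hk₂.le _))
        _ = Bt := by
            rw [hBtdef, hEdef, mul_assoc, ← Real.rpow_add h2t]
    have hGr0 : 0 ≤ (x ^ a) ^ (p - 2) * u ^ p * c :=
      mul_nonneg (mul_nonneg (Real.rpow_nonneg hxa0.le _) (Real.rpow_nonneg hu0 _)) hc0
    have hmain : u * c ≤ ((x ^ a) ^ (p - 2) * u ^ p * c) ^ (1/p) * Bt := by
      have h1 : ((x ^ a) ^ (p - 2)) ^ (1/p) = x ^ (a * (p - 2) / p) := by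
        rw [← Real.rpow_mul hxa0.le, ← Real.rpow_mul hx0.le]
        congr 1
        field_simp
      have h2 : (u ^ p) ^ (1/p) = u := by
        rw [← Real.rpow_mul hu0, mul_one_div, div_self hp0', Real.rpow_one]
      have h3 : ((x ^ a) ^ (p - 2) * u ^ p * c) ^ (1/p)
          = x ^ (a * (p - 2) / p) * u * c ^ (1/p) := by
        rw [Real.mul_rpow (mul_nonneg (Real.rpow_nonneg hxa0.le _) (Real.rpow_nonneg hu0 _)) hc0,
            Real.mul_rpow (Real.rpow_nonneg hxa0.le _) (Real.rpow_nonneg hu0 _), h1, h2]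
      rw [h3]
      have h4 : c ^ (1/p) * c ^ (1/q) = c := by
        rw [← Real.rpow_add' hc0 (by rw [hsum]; norm_num), hsum, Real.rpow_one]
      have h5 : x ^ (a * (p - 2) / p) = (x ^ (a * (2 - p) / p))⁻¹ := by
        rw [← Real.rpow_neg hx0.le]
        congr 1
        ring
      have h6 : c ^ (1/q) ≤ x ^ (a * (p - 2) / p) * Bt := by
        rw [h5, ← div_eq_inv_mul, le_div_iff₀ (Real.rpow_pos_of_pos hx0 _)]
        exact key
      calc u * c = (u * c ^ (1/p)) * c ^ (1/q) := by rw [mul_assoc, h4]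
        _ ≤ (u * c ^ (1/p)) * (x ^ (a * (p - 2) / p) * Bt) :=
            mul_le_mul_of_nonneg_left h6 (mul_nonneg hu0 (Real.rpow_nonneg hc0 _))
        _ = x ^ (a * (p - 2) / p) * u * c ^ (1/p) * Bt := by ring
    calc ENNReal.ofReal (u * c)
        ≤ ENNReal.ofReal (((x ^ a) ^ (p - 2) * u ^ p * c) ^ (1/p) * Bt) :=
          ENNReal.ofReal_le_ofReal hmain
      _ = ENNReal.ofReal (((x ^ a) ^ (p - 2) * u ^ p * c) ^ (1/p)) * ENNReal.ofReal Bt :=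
          ENNReal.ofReal_mul (Real.rpow_nonneg hGr0 _)
      _ = G x ^ (1/p) * ENNReal.ofReal Bt := by
          rw [← ENNReal.ofReal_rpow_of_nonneg hGr0 (by positivity : (0:ℝ) ≤ 1/p)]
  -- Hölder on the shell
  have hmeasu : AEMeasurable (fun x => G x ^ (1/p)) (volume.restrict (Set.Ioc t (2*t))) :=
    (hGmeas.pow measurable_const).aemeasurable
  have hH : ∫⁻ x in Set.Ioc t (2*t), G x ^ (1/p) * ENNReal.ofReal Bt
      ≤ (∫⁻ x in Set.Ioc t (2*t), (G x ^ (1/p)) ^ p) ^ (1/p)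
        * (∫⁻ _ in Set.Ioc t (2*t), (ENNReal.ofReal Bt) ^ q) ^ (1/q) :=
    ENNReal.lintegral_mul_le_Lp_mul_Lq _ hpq hmeasu aemeasurable_const
  have hfst : ∫⁻ x in Set.Ioc t (2*t), (G x ^ (1/p)) ^ p = ∫⁻ x in Set.Ioc t (2*t), G x := by
    apply lintegral_congr
    intro x
    rw [← ENNReal.rpow_mul, one_div, inv_mul_cancel₀ hp0', ENNReal.rpow_one]
  have hsnd : (∫⁻ _ in Set.Ioc t (2*t), (ENNReal.ofReal Bt) ^ q) ^ (1/q)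
      = ENNReal.ofReal Bt * ENNReal.ofReal (t ^ (1/q)) := by
    rw [setLIntegral_const, Real.volume_Ioc, show 2*t - t = t by ring,
      ENNReal.mul_rpow_of_nonneg _ _ (by positivity : (0:ℝ) ≤ 1/q),
      ← ENNReal.rpow_mul, mul_one_div, div_self hq0', ENNReal.rpow_one,
      ENNReal.ofReal_rpow_of_nonneg ht.le (by positivity : (0:ℝ) ≤ 1/q)]
  -- Hardy–Littlewood bound for the G-integral
  have hHball : ∫⁻ x in Set.Ioc t (2*t), G x ≤ ENNReal.ofReal (S.c₀⁻¹ ^ p * (C * ω ^ p)) := by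
    have hae : ∀ᵐ x ∂(volume.restrict (Set.Ioc t (2*t))),
        G x ≤ ENNReal.ofReal (S.c₀⁻¹ ^ p) *
          ENNReal.ofReal ((if x ≤ S.k then x ^ (3:ℝ) else x ^ (2*(S.α+1))) ^ (p-2) *
            ‖S.FT g x‖ ^ p * S.cden x) := by
      filter_upwards [hkey, ae_restrict_mem measurableSet_Ioc] with x hkx hx
      have hx0 : 0 < x := lt_trans ht hx.1
      have hc₀inv : (0:ℝ) ≤ S.c₀⁻¹ := inv_nonneg.mpr S.hc₀.le
      have hu : ‖S.FT f x‖ ≤ S.c₀⁻¹ * ‖S.FT g x‖ := by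
        have h9 := mul_le_mul_of_nonneg_left hkx hc₀inv
        rwa [← mul_assoc, inv_mul_cancel₀ (ne_of_gt S.hc₀), one_mul] at h9
      have hup : ‖S.FT f x‖ ^ p ≤ S.c₀⁻¹ ^ p * ‖S.FT g x‖ ^ p := by
        calc ‖S.FT f x‖ ^ p ≤ (S.c₀⁻¹ * ‖S.FT g x‖) ^ p :=
              Real.rpow_le_rpow (norm_nonneg _) hu hp0.le
          _ = _ := Real.mul_rpow hc₀inv (norm_nonneg _)
      rw [hwt x hx]
      simp only [hGdef]
      rw [← ENNReal.ofReal_mul (Real.rpow_nonneg hc₀inv p)]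
      apply ENNReal.ofReal_le_ofReal
      have hxa0 : (0:ℝ) ≤ (x ^ a) ^ (p - 2) :=
        Real.rpow_nonneg (Real.rpow_nonneg hx0.le _) _
      calc (x^a)^(p-2) * ‖S.FT f x‖ ^ p * S.cden x
          ≤ (x^a)^(p-2) * (S.c₀⁻¹ ^ p * ‖S.FT g x‖ ^ p) * S.cden x :=
            mul_le_mul_of_nonneg_right (mul_le_mul_of_nonneg_left hup hxa0) (jh_cden_nonneg S x)
        _ = S.c₀⁻¹ ^ p * ((x^a)^(p-2) * ‖S.FT g x‖ ^ p * S.cden x) := by ring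
    calc ∫⁻ x in Set.Ioc t (2*t), G x
        ≤ ∫⁻ x in Set.Ioc t (2*t), ENNReal.ofReal (S.c₀⁻¹ ^ p) *
            ENNReal.ofReal ((if x ≤ S.k then x ^ (3:ℝ) else x ^ (2*(S.α+1))) ^ (p-2) *
              ‖S.FT g x‖ ^ p * S.cden x) := lintegral_mono_ae hae
      _ = ENNReal.ofReal (S.c₀⁻¹ ^ p) * ∫⁻ x in Set.Ioc t (2*t),
            ENNReal.ofReal ((if x ≤ S.k then x ^ (3:ℝ) else x ^ (2*(S.α+1))) ^ (p-2) *
              ‖S.FT g x‖ ^ p * S.cden x) :=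
          lintegral_const_mul' _ _ ENNReal.ofReal_ne_top
      _ ≤ ENNReal.ofReal (S.c₀⁻¹ ^ p) * ENNReal.ofReal (C * ω ^ p) := by
          apply mul_le_mul_right
          refine (lintegral_mono_set hsub).trans ?_
          exact hHLC g hgmem
      _ = ENNReal.ofReal (S.c₀⁻¹ ^ p * (C * ω ^ p)) :=
          (ENNReal.ofReal_mul (Real.rpow_nonneg (inv_nonneg.mpr S.hc₀.le) p)).symm
  have hω0' : 0 ≤ ω := hω0
  have hGp : (∫⁻ x in Set.Ioc t (2*t), G x) ^ (1/p)
      ≤ ENNReal.ofReal (S.c₀⁻¹ * C ^ (1/p) * ω) := by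
    have hc₀inv : (0:ℝ) ≤ S.c₀⁻¹ := inv_nonneg.mpr S.hc₀.le
    have hBp : (C ^ (1/p : ℝ)) ^ p = C := by
      rw [← Real.rpow_mul hC.le, one_div, inv_mul_cancel₀ hp0', Real.rpow_one]
    have h7 : S.c₀⁻¹ ^ p * (C * ω ^ p) = (S.c₀⁻¹ * C ^ (1/p) * ω) ^ p := by
      rw [Real.mul_rpow (mul_nonneg hc₀inv (Real.rpow_nonneg hC.le _)) hω0',
          Real.mul_rpow hc₀inv (Real.rpow_nonneg hC.le _), hBp]
      ring
    have h8 : (0:ℝ) ≤ S.c₀⁻¹ * C ^ (1/p) * ω :=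
      mul_nonneg (mul_nonneg hc₀inv (Real.rpow_nonneg hC.le _)) hω0'
    calc (∫⁻ x in Set.Ioc t (2*t), G x) ^ (1/p)
        ≤ (ENNReal.ofReal (S.c₀⁻¹ ^ p * (C * ω ^ p))) ^ (1/p) :=
          ENNReal.rpow_le_rpow hHball (by positivity)
      _ = ENNReal.ofReal (S.c₀⁻¹ * C ^ (1/p) * ω) := by
          rw [h7, ← ENNReal.ofReal_rpow_of_nonneg h8 hp0.le,
              ← ENNReal.rpow_mul, mul_one_div, div_self hp0', ENNReal.rpow_one]
  -- stage 1 : put the pieces together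
  have hstage1 : ∫⁻ x in Set.Ioc t (2*t), ENNReal.ofReal (‖S.FT f x‖ * S.cden x)
      ≤ ENNReal.ofReal ((S.c₀⁻¹ * C ^ (1/p) * ω) * (Bt * t ^ (1/q))) := by
    have hc₀inv : (0:ℝ) ≤ S.c₀⁻¹ := inv_nonneg.mpr S.hc₀.le
    have h8 : (0:ℝ) ≤ S.c₀⁻¹ * C ^ (1/p) * ω :=
      mul_nonneg (mul_nonneg hc₀inv (Real.rpow_nonneg hC.le _)) hω0'
    have hmono : ∫⁻ x in Set.Ioc t (2*t), ENNReal.ofReal (‖S.FT f x‖ * S.cden x)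
        ≤ ∫⁻ x in Set.Ioc t (2*t), G x ^ (1/p) * ENNReal.ofReal Bt := by
      apply lintegral_mono_ae
      filter_upwards [ae_restrict_mem measurableSet_Ioc] with x hx
      exact hpt x hx
    refine (hmono.trans (hH.trans ?_))
    rw [hfst, hsnd]
    calc (∫⁻ x in Set.Ioc t (2*t), G x) ^ (1/p)
          * (ENNReal.ofReal Bt * ENNReal.ofReal (t ^ (1/q)))
        ≤ ENNReal.ofReal (S.c₀⁻¹ * C ^ (1/p) * ω)
          * (ENNReal.ofReal Bt * ENNReal.ofReal (t ^ (1/q))) := mul_le_mul_left hGp _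
      _ = ENNReal.ofReal ((S.c₀⁻¹ * C ^ (1/p) * ω) * (Bt * t ^ (1/q))) := by
          rw [← ENNReal.ofReal_mul hBt0, ← ENNReal.ofReal_mul h8]
  -- stage 2 : real arithmetic
  refine hstage1.trans (ENNReal.ofReal_le_ofReal ?_)
  have hδγ : 0 < δ ^ γ := Real.rpow_pos_of_pos hδ0 γ
  have hF0 : 0 ≤ F := by
    rw [hFdef]
    exact div_nonneg (div_nonneg hω0' hδγ.le) hδ0.le
  have hωF : ω = F * δ ^ γ * δ := by
    rw [hFdef]
    field_simp
  have hEq : γexp + 1/q = γ := by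
    have hb' : b = a - 1 := by linarith
    rw [hEdef, hq, hγ, hb']
    field_simp
    ring
  have hBtq : Bt * t ^ (1/q) = S.k₂ ^ (1/q) * 2 ^ γexp * t ^ γ := by
    have h2te : (2*t) ^ γexp = 2 ^ γexp * t ^ γexp := Real.mul_rpow (by norm_num) ht.le
    have htE : t ^ γexp * t ^ (1/q) = t ^ γ := by rw [← Real.rpow_add ht, hEq]
    rw [hBtdef, h2te,
      show S.k₂ ^ (1/q) * (2 ^ γexp * t ^ γexp) * t ^ (1/q)
        = S.k₂ ^ (1/q) * 2 ^ γexp * (t ^ γexp * t ^ (1/q)) from by ring, htE]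
  rw [hBtq]
  have htγ : 0 < t ^ γ := Real.rpow_pos_of_pos ht γ
  have hδγle : δ ^ γ ≤ 2 ^ γ / t ^ γ := by
    rw [← Real.div_rpow (by norm_num) ht.le]
    exact Real.rpow_le_rpow hδ0.le hδ.2 hγ0
  have hkey2 : t ^ γ * ω ≤ 2 ^ γ * 2 * t⁻¹ * F := by
    rw [hωF]
    have h8 : F * δ ^ γ * δ ≤ F * (2 ^ γ / t ^ γ) * (2 / t) := by
      apply mul_le_mul (mul_le_mul_of_nonneg_left hδγle hF0) hδ.2 hδ0.le
      exact mul_nonneg hF0 (div_nonneg (Real.rpow_nonneg (by norm_num) _) htγ.le)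
    calc t ^ γ * (F * δ ^ γ * δ) ≤ t ^ γ * (F * (2 ^ γ / t ^ γ) * (2 / t)) :=
          mul_le_mul_of_nonneg_left h8 htγ.le
      _ = 2 ^ γ * 2 * t⁻¹ * F := by
          field_simp
  have hP0 : (0:ℝ) ≤ S.c₀⁻¹ * C ^ (1/p) * S.k₂ ^ (1/q) * 2 ^ γexp :=
    mul_nonneg (mul_nonneg (mul_nonneg (inv_nonneg.mpr S.hc₀.le)
      (Real.rpow_nonneg hC.le _)) (Real.rpow_nonneg S.hk₂.le _))
      (Real.rpow_nonneg (by norm_num) _)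
  calc (S.c₀⁻¹ * C ^ (1/p) * ω) * (S.k₂ ^ (1/q) * 2 ^ γexp * t ^ γ)
      = (S.c₀⁻¹ * C ^ (1/p) * S.k₂ ^ (1/q) * 2 ^ γexp) * (t ^ γ * ω) := by ring
    _ ≤ (S.c₀⁻¹ * C ^ (1/p) * S.k₂ ^ (1/q) * 2 ^ γexp) * (2 ^ γ * 2 * t⁻¹ * F) :=
        mul_le_mul_of_nonneg_left hkey2 hP0
    _ = (S.c₀⁻¹ * C ^ (1/p) * S.k₂ ^ (1/q) * 2 ^ γexp * 2 ^ γ * 2) * t⁻¹ * F := by ring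

end JacobiShell

section JacobiRegion

open ENNReal

lemma jh_shell_J (S : JacobiHypergroup) (p q : ℝ) (hp : 1 < p) (hp2 : p ≤ 2)
    (hq : q = p / (p - 1))
    (C : ℝ) (hC : 0 < C)
    (hHLC : ∀ g : ℝ → ℂ, MemW S.A p g →
      ∫⁻ x in Set.Ioi (0 : ℝ),
          ENNReal.ofReal ((if x ≤ S.k then x ^ (3 : ℝ) else x ^ (2 * (S.α + 1))) ^ (p - 2) *
            ‖S.FT g x‖ ^ p * S.cden x)
        ≤ ENNReal.ofReal (C * wLpNorm S.A p g ^ p))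
    (f : ℝ → ℂ) (hf : MemW S.A p f)
    (a b γ : ℝ) (hab : b + 1 = a) (hb : 0 < b) (hγ : γ = a / p)
    (t : ℝ) (ht : 0 < t)
    (hwt : ∀ x ∈ Set.Ioc t (2 * t),
      (if x ≤ S.k then x ^ (3 : ℝ) else x ^ (2 * (S.α + 1))) = x ^ a)
    (hcd : ∀ x ∈ Set.Ioc t (2 * t), S.cden x ≤ S.k₂ * x ^ b) :
    ∫⁻ x in Set.Ioc t (2 * t), ENNReal.ofReal (‖S.FT f x‖ * S.cden x)
      ≤ ENNReal.ofReal
          (S.c₀⁻¹ * C ^ (1 / p) * S.k₂ ^ (1 / q) * 2 ^ (b / q + a * (2 - p) / p) * 2 ^ γ * 2)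
        * ∫⁻ x in Set.Ioc (1 / t) (2 / t), ENNReal.ofReal (S.omega p f x / x ^ γ / x) := by
  have hp0 : (0:ℝ) < p := lt_trans one_pos hp
  have hp1 : (0:ℝ) < p - 1 := by linarith
  have hq0 : 0 < q := by rw [hq]; positivity
  set K := S.c₀⁻¹ * C ^ (1/p) * S.k₂ ^ (1/q) * 2 ^ (b/q + a*(2-p)/p) * 2 ^ γ * 2 with hK
  have hK0 : 0 ≤ K := by
    rw [hK]
    have h1 : (0:ℝ) ≤ S.c₀⁻¹ := inv_nonneg.mpr S.hc₀.le
    exact mul_nonneg (mul_nonneg (mul_nonneg (mul_nonneg (mul_nonneg h1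
      (Real.rpow_nonneg hC.le _)) (Real.rpow_nonneg S.hk₂.le _))
      (Real.rpow_nonneg (by norm_num) _)) (Real.rpow_nonneg (by norm_num) _)) (by norm_num)
  set L := ∫⁻ x in Set.Ioc t (2 * t), ENNReal.ofReal (‖S.FT f x‖ * S.cden x) with hL
  have hmono : ∀ᵐ δ ∂(volume.restrict (Set.Ioc (1/t) (2/t))),
      L ≤ ENNReal.ofReal (K * t⁻¹) * ENNReal.ofReal (S.omega p f δ / δ ^ γ / δ) := by
    filter_upwards [ae_restrict_mem measurableSet_Ioc] with δ hδ
    have hest := jh_shell_est S p q hp hp2 hq C hC hHLC f hf a b γ hab hb hγ t ht hwt hcd δ hδ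
    rw [← ENNReal.ofReal_mul (mul_nonneg hK0 (inv_nonneg.mpr ht.le))]
    exact hest
  have hint : L * ENNReal.ofReal (1/t)
      ≤ ENNReal.ofReal (K * t⁻¹)
        * ∫⁻ δ in Set.Ioc (1/t) (2/t), ENNReal.ofReal (S.omega p f δ / δ ^ γ / δ) := by
    calc L * ENNReal.ofReal (1/t)
        = ∫⁻ _ in Set.Ioc (1/t) (2/t), L := by
          rw [setLIntegral_const, Real.volume_Ioc, show 2/t - 1/t = 1/t by ring]
      _ ≤ ∫⁻ δ in Set.Ioc (1/t) (2/t),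
            ENNReal.ofReal (K * t⁻¹) * ENNReal.ofReal (S.omega p f δ / δ ^ γ / δ) :=
          lintegral_mono_ae hmono
      _ = _ := lintegral_const_mul' _ _ ENNReal.ofReal_ne_top
  have hc : ENNReal.ofReal (1/t) ≠ 0 := (ENNReal.ofReal_pos.mpr (one_div_pos.mpr ht)).ne'
  rw [ENNReal.ofReal_mul hK0, show (t⁻¹ : ℝ) = 1/t from (one_div t).symm] at hint
  rw [mul_right_comm] at hint
  exact (ENNReal.mul_le_mul_iff_left hc ENNReal.ofReal_ne_top).mp hint

lemma jh_region (S : JacobiHypergroup) (p q : ℝ) (hp : 1 < p) (hp2 : p ≤ 2)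
    (hq : q = p / (p - 1))
    (C : ℝ) (hC : 0 < C)
    (hHLC : ∀ g : ℝ → ℂ, MemW S.A p g →
      ∫⁻ x in Set.Ioi (0 : ℝ),
          ENNReal.ofReal ((if x ≤ S.k then x ^ (3 : ℝ) else x ^ (2 * (S.α + 1))) ^ (p - 2) *
            ‖S.FT g x‖ ^ p * S.cden x)
        ≤ ENNReal.ofReal (C * wLpNorm S.A p g ^ p))
    (f : ℝ → ℂ) (hf : MemW S.A p f)
    (a b γ : ℝ) (hab : b + 1 = a) (hb : 0 < b) (hγ : γ = a / p)
    (tf : ℕ → ℝ) (htf : ∀ n, 0 < tf n)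
    (hwt : ∀ n, ∀ x ∈ Set.Ioc (tf n) (2 * tf n),
      (if x ≤ S.k then x ^ (3 : ℝ) else x ^ (2 * (S.α + 1))) = x ^ a)
    (hcd : ∀ n, ∀ x ∈ Set.Ioc (tf n) (2 * tf n), S.cden x ≤ S.k₂ * x ^ b)
    (R : Set ℝ) (hcov : R ⊆ ⋃ n : ℕ, Set.Ioc (tf n) (2 * tf n))
    (hdisj : Pairwise (Function.onFun Disjoint fun n : ℕ => Set.Ioc (1 / tf n) (2 / tf n))) :
    ∫⁻ x in R, ENNReal.ofReal (‖S.FT f x‖ * S.cden x)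
      ≤ ENNReal.ofReal
          (S.c₀⁻¹ * C ^ (1 / p) * S.k₂ ^ (1 / q) * 2 ^ (b / q + a * (2 - p) / p) * 2 ^ γ * 2)
        * ∫⁻ x in Set.Ioi (0:ℝ), ENNReal.ofReal (S.omega p f x / x ^ γ / x) := by
  calc ∫⁻ x in R, ENNReal.ofReal (‖S.FT f x‖ * S.cden x)
      ≤ ∫⁻ x in ⋃ n : ℕ, Set.Ioc (tf n) (2 * tf n),
          ENNReal.ofReal (‖S.FT f x‖ * S.cden x) := lintegral_mono_set hcov
    _ ≤ ∑' n : ℕ, ∫⁻ x in Set.Ioc (tf n) (2 * tf n),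
          ENNReal.ofReal (‖S.FT f x‖ * S.cden x) := lintegral_iUnion_le _ _
    _ ≤ ∑' n : ℕ, ENNReal.ofReal
          (S.c₀⁻¹ * C ^ (1 / p) * S.k₂ ^ (1 / q) * 2 ^ (b / q + a * (2 - p) / p) * 2 ^ γ * 2)
        * ∫⁻ x in Set.Ioc (1 / tf n) (2 / tf n), ENNReal.ofReal (S.omega p f x / x ^ γ / x) :=
        ENNReal.tsum_le_tsum (fun n => jh_shell_J S p q hp hp2 hq C hC hHLC f hf a b γ hab hb hγ
          (tf n) (htf n) (hwt n) (hcd n))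
    _ = ENNReal.ofReal
          (S.c₀⁻¹ * C ^ (1 / p) * S.k₂ ^ (1 / q) * 2 ^ (b / q + a * (2 - p) / p) * 2 ^ γ * 2)
        * ∑' n : ℕ, ∫⁻ x in Set.Ioc (1 / tf n) (2 / tf n),
            ENNReal.ofReal (S.omega p f x / x ^ γ / x) := ENNReal.tsum_mul_left
    _ ≤ _ := by
        apply mul_le_mul_right
        exact jh_tsum_le _ _ (fun n => measurableSet_Ioc) hdisj
          (fun n x hx => lt_trans (one_div_pos.mpr (htf n)) hx.1)

end JacobiRegion

section JacobiCover

open ENNReal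

lemma jh_cov_big (k : ℝ) (hk : 0 < k) :
    Set.Ioi k ⊆ ⋃ n : ℕ, Set.Ioc (k * 2 ^ n) (2 * (k * 2 ^ n)) := by
  intro x hx
  have hx' : k < x := hx
  have hex : ∃ m : ℕ, x ≤ 2 * (k * 2 ^ m) := by
    obtain ⟨m, hm⟩ := pow_unbounded_of_one_lt (x / k) (by norm_num : (1:ℝ) < 2)
    refine ⟨m, ?_⟩
    rw [div_lt_iff₀ hk] at hm
    nlinarith [pow_pos (by norm_num : (0:ℝ) < 2) m]
  classical
  set n := Nat.find hex with hn
  have h1 : x ≤ 2 * (k * 2 ^ n) := Nat.find_spec hex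
  have h2 : k * 2 ^ n < x := by
    rcases Nat.eq_zero_or_pos n with h0 | h0
    · rw [h0]
      simpa using hx'
    · obtain ⟨m, hm⟩ := Nat.exists_eq_succ_of_ne_zero h0.ne'
      have hmin := Nat.find_min hex (m := m) (by omega)
      push_neg at hmin
      rw [hm]
      calc k * 2 ^ (m+1) = 2 * (k * 2 ^ m) := by rw [pow_succ]; ring
        _ < x := hmin
  exact Set.mem_iUnion.mpr ⟨n, h2, h1⟩

lemma jh_cov_small (k : ℝ) (hk : 0 < k) :
    Set.Ioc 0 k ⊆ ⋃ n : ℕ, Set.Ioc (k / 2 ^ (n+1)) (2 * (k / 2 ^ (n+1))) := by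
  intro x hx
  have hx0 : 0 < x := hx.1
  have hex : ∃ m : ℕ, k / 2 ^ (m+1) < x := by
    obtain ⟨m, hm⟩ := pow_unbounded_of_one_lt (k / x) (by norm_num : (1:ℝ) < 2)
    refine ⟨m, ?_⟩
    rw [div_lt_iff₀ hx0] at hm
    rw [div_lt_iff₀ (pow_pos (by norm_num : (0:ℝ) < 2) (m+1))]
    calc k < 2 ^ m * x := hm
      _ ≤ x * 2 ^ (m+1) := by
          rw [pow_succ]
          nlinarith [pow_pos (by norm_num : (0:ℝ) < 2) m]
  classical
  set n := Nat.find hex with hn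
  have h1 : k / 2 ^ (n+1) < x := Nat.find_spec hex
  have h2 : x ≤ 2 * (k / 2 ^ (n+1)) := by
    have h2e : 2 * (k / 2 ^ (n+1)) = k / 2 ^ n := by rw [pow_succ]; ring
    rw [h2e]
    rcases Nat.eq_zero_or_pos n with h0 | h0
    · rw [h0]
      simpa using hx.2
    · obtain ⟨m, hm⟩ := Nat.exists_eq_succ_of_ne_zero h0.ne'
      have hmin := Nat.find_min hex (m := m) (by omega)
      push_neg at hmin
      rw [hm]
      exact hmin
  exact Set.mem_iUnion.mpr ⟨n, h1, h2⟩

lemma jh_disj_big (k : ℝ) (hk : 0 < k) :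
    Pairwise (Function.onFun Disjoint fun n : ℕ => Set.Ioc (1/(k * 2 ^ n)) (2/(k * 2 ^ n))) := by
  have key : ∀ m n : ℕ, m < n → 2/(k * 2 ^ n) ≤ 1/(k * 2 ^ m) := by
    intro m n hmn
    rw [div_le_div_iff₀ (mul_pos hk (pow_pos (by norm_num) n))
      (mul_pos hk (pow_pos (by norm_num) m)), one_mul]
    calc 2 * (k * 2 ^ m) = k * 2 ^ (m+1) := by rw [pow_succ]; ring
      _ ≤ k * 2 ^ n := by
          apply mul_le_mul_of_nonneg_left _ hk.le
          exact pow_le_pow_right₀ (by norm_num) (by omega)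
  intro m n hmn
  rcases lt_or_gt_of_ne hmn with h | h
  · exact (jh_Ioc_disj (key m n h)).symm
  · exact jh_Ioc_disj (key n m h)

lemma jh_disj_small (k : ℝ) (hk : 0 < k) :
    Pairwise (Function.onFun Disjoint fun n : ℕ => Set.Ioc (1/(k / 2 ^ (n+1))) (2/(k / 2 ^ (n+1)))) := by
  have key : ∀ m n : ℕ, m < n → 2/(k / 2 ^ (m+1)) ≤ 1/(k / 2 ^ (n+1)) := by
    intro m n hmn
    rw [div_le_div_iff₀ (div_pos hk (pow_pos (by norm_num) (m+1)))
      (div_pos hk (pow_pos (by norm_num) (n+1))), one_mul]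
    calc 2 * (k / 2 ^ (n+1)) = k / 2 ^ n := by rw [pow_succ]; ring
      _ ≤ k / 2 ^ (m+1) := by
          rw [div_le_div_iff₀ (pow_pos (by norm_num) n) (pow_pos (by norm_num) (m+1))]
          apply mul_le_mul_of_nonneg_left _ hk.le
          exact pow_le_pow_right₀ (by norm_num) (by omega)
  intro m n hmn
  rcases lt_or_gt_of_ne hmn with h | h
  · exact jh_Ioc_disj (key m n h)
  · exact (jh_Ioc_disj (key n m h)).symm

end JacobiCover

/-- **Theorem 1**: let `1 < p ≤ 2`.  If `f` belongs to the intersection of the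
Besov-type spaces `B^{p,1}_{2(α+1)/p, α}` and `B^{p,1}_{3/p, α}` on the Jacobi
hypergroup (i.e. `f ∈ L^p_A(ℝ₊)` and `∫₀^∞ (ω_{A,p}(f)(x)/x^γ) dx/x < ∞` for
`γ = 2(α+1)/p` and `γ = 3/p`), then `𝓕(f) ∈ L¹_c(ℝ₊)`, that is,
`∫₀^∞ |𝓕(f)(t)| dt/|c(t)|² < ∞`. -/
theorem theorem_one (S : JacobiHypergroup) (p : ℝ) (hp : 1 < p) (hp2 : p ≤ 2)
    (f : ℝ → ℂ) (hf : MemW S.A p f)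
    (hBesov1 : ∫⁻ x in Set.Ioi (0 : ℝ),
        ENNReal.ofReal (S.omega p f x / x ^ (2 * (S.α + 1) / p) / x) < ⊤)
    (hBesov2 : ∫⁻ x in Set.Ioi (0 : ℝ),
        ENNReal.ofReal (S.omega p f x / x ^ (3 / p) / x) < ⊤) :
    ∫⁻ t in Set.Ioi (0 : ℝ),
        ENNReal.ofReal (‖S.FT f t‖ * S.cden t) < ⊤ := by
  obtain ⟨C, hC, hHLC⟩ := S.hHL p hp hp2
  have hk := S.hk
  have hα2 : 0 < 2 * S.α + 1 := jh_alpha_pos S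
  -- big region : x > k, dyadic shells (k 2^n, 2 k 2^n]
  have hbig : ∫⁻ x in Set.Ioi S.k, ENNReal.ofReal (‖S.FT f x‖ * S.cden x)
      ≤ ENNReal.ofReal
          (S.c₀⁻¹ * C ^ (1 / p) * S.k₂ ^ (1 / (p / (p-1)))
            * 2 ^ ((2 * S.α + 1) / (p / (p-1)) + 2 * (S.α + 1) * (2 - p) / p)
            * 2 ^ (2 * (S.α + 1) / p) * 2)
        * ∫⁻ x in Set.Ioi (0:ℝ),
            ENNReal.ofReal (S.omega p f x / x ^ (2 * (S.α + 1) / p) / x) := by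
    apply jh_region S p (p / (p-1)) hp hp2 rfl C hC hHLC f hf
      (2 * (S.α + 1)) (2 * S.α + 1) (2 * (S.α + 1) / p) (by ring) hα2 rfl
      (fun n => S.k * 2 ^ n) (fun n => mul_pos hk (pow_pos (by norm_num) n))
    · -- weight identification on big shells
      intro n x hx
      have hkx : S.k < x := by
        have h1 : S.k ≤ S.k * 2 ^ n :=
          le_mul_of_one_le_right hk.le (one_le_pow₀ (by norm_num))
        exact lt_of_le_of_lt h1 hx.1
      rw [if_neg (not_le.mpr hkx)]
    · -- cden bound on big shells
      intro n x hx
      have hx0 : 0 < x :=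
        lt_trans (mul_pos hk (pow_pos (by norm_num) n)) hx.1
      have hkx : S.k < |x| := by
        rw [abs_of_pos hx0]
        have h1 : S.k ≤ S.k * 2 ^ n :=
          le_mul_of_one_le_right hk.le (one_le_pow₀ (by norm_num))
        exact lt_of_le_of_lt h1 hx.1
      have := (S.hcden_hi x hkx).2
      rwa [abs_of_pos hx0] at this
    · exact jh_cov_big S.k hk
    · exact jh_disj_big S.k hk
  -- small region : 0 < x ≤ k, dyadic shells (k/2^{n+1}, k/2^n]
  have hsmall : ∫⁻ x in Set.Ioc 0 S.k, ENNReal.ofReal (‖S.FT f x‖ * S.cden x)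
      ≤ ENNReal.ofReal
          (S.c₀⁻¹ * C ^ (1 / p) * S.k₂ ^ (1 / (p / (p-1)))
            * 2 ^ ((2:ℝ) / (p / (p-1)) + 3 * (2 - p) / p)
            * 2 ^ (3 / p) * 2)
        * ∫⁻ x in Set.Ioi (0:ℝ),
            ENNReal.ofReal (S.omega p f x / x ^ (3 / p) / x) := by
    apply jh_region S p (p / (p-1)) hp hp2 rfl C hC hHLC f hf
      (3:ℝ) (2:ℝ) (3 / p) (by norm_num) (by norm_num) rfl
      (fun n => S.k / 2 ^ (n+1)) (fun n => div_pos hk (pow_pos (by norm_num) (n+1)))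
    · -- weight identification on small shells
      intro n x hx
      have hxk : x ≤ S.k := by
        have h1 : 2 * (S.k / 2 ^ (n+1)) = S.k / 2 ^ n := by rw [pow_succ]; ring
        have h2 : S.k / 2 ^ n ≤ S.k := by
          rw [div_le_iff₀ (pow_pos (by norm_num : (0:ℝ) < 2) n)]
          nlinarith [one_le_pow₀ (by norm_num : (1:ℝ) ≤ 2) (n := n), hk]
        exact hx.2.trans (h1 ▸ h2)
      rw [if_pos hxk]
    · -- cden bound on small shells
      intro n x hx
      have hx0 : 0 < x := lt_trans (div_pos hk (pow_pos (by norm_num) (n+1))) hx.1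
      have hxk : |x| ≤ S.k := by
        rw [abs_of_pos hx0]
        have h1 : 2 * (S.k / 2 ^ (n+1)) = S.k / 2 ^ n := by rw [pow_succ]; ring
        have h2 : S.k / 2 ^ n ≤ S.k := by
          rw [div_le_iff₀ (pow_pos (by norm_num : (0:ℝ) < 2) n)]
          nlinarith [one_le_pow₀ (by norm_num : (1:ℝ) ≤ 2) (n := n), hk]
        exact hx.2.trans (h1 ▸ h2)
      have := (S.hcden_lo x hxk).2
      rwa [abs_of_pos hx0] at this
    · exact jh_cov_small S.k hk
    · exact jh_disj_small S.k hk
  -- split the integral and conclude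
  have hsplit : ∫⁻ t in Set.Ioi (0:ℝ), ENNReal.ofReal (‖S.FT f t‖ * S.cden t)
      ≤ (∫⁻ x in Set.Ioc 0 S.k, ENNReal.ofReal (‖S.FT f x‖ * S.cden x))
        + ∫⁻ x in Set.Ioi S.k, ENNReal.ofReal (‖S.FT f x‖ * S.cden x) := by
    have hsub : Set.Ioi (0:ℝ) ⊆ Set.Ioc 0 S.k ∪ Set.Ioi S.k := by
      intro x hx
      rcases le_or_gt x S.k with h | h
      · exact Or.inl ⟨hx, h⟩
      · exact Or.inr h
    calc ∫⁻ t in Set.Ioi (0:ℝ), ENNReal.ofReal (‖S.FT f t‖ * S.cden t)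
        ≤ ∫⁻ t in Set.Ioc 0 S.k ∪ Set.Ioi S.k,
            ENNReal.ofReal (‖S.FT f t‖ * S.cden t) := lintegral_mono_set hsub
      _ ≤ ∫⁻ t, ENNReal.ofReal (‖S.FT f t‖ * S.cden t)
            ∂(volume.restrict (Set.Ioc 0 S.k) + volume.restrict (Set.Ioi S.k)) :=
          lintegral_mono' (Measure.restrict_union_le _ _) (le_refl _)
      _ = _ := lintegral_add_measure _ _ _
  refine lt_of_le_of_lt (hsplit.trans (add_le_add hsmall hbig)) ?_
  exact ENNReal.add_lt_top.mpr
    ⟨ENNReal.mul_lt_top ENNReal.ofReal_lt_top hBesov2,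
     ENNReal.mul_lt_top ENNReal.ofReal_lt_top hBesov1⟩
end

section
/- Theorem 2 (i): Let 1 < p ≤ 2 with conjugate exponent p', let γ satisfy 0 < γ ≤ 2(α+1)/p, and let f belong to the Besov-type space B^{p,∞}_{γ,α} on the Jacobi hypergroup. Then 𝓕(f) ∈ L^s_c(ℝ₊) for every s with 2(α+1)p/(γp + 2(α+1)(p−1)) < s ≤ p'. -/
open MeasureTheory Set Filter

open scoped ENNReal NNReal

private lemma holder_aux {μ : MeasureTheory.Measure ℝ} (G : ℝ → ℝ≥0∞) (hG : AEMeasurable G μ)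
    {θ : ℝ} (h0 : 0 < θ) (h1 : θ < 1) :
    ∫⁻ x, G x ^ θ ∂μ ≤ (∫⁻ x, G x ∂μ) ^ θ * (μ Set.univ) ^ (1 - θ) := by
  have hθ1 : (0:ℝ) < 1 - θ := by linarith
  have hconj : (1/θ).HolderConjugate (1/(1-θ)) := by
    rw [Real.holderConjugate_iff]
    constructor
    · rw [lt_div_iff₀ h0]; linarith
    · simp only [one_div, inv_inv]; ring
  have h := ENNReal.lintegral_mul_le_Lp_mul_Lq μ hconj
    (f := fun x => G x ^ θ) (g := fun _ => 1) (hG.pow_const θ) aemeasurable_const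
  simp only [mul_one, ENNReal.one_rpow, lintegral_one, Pi.mul_apply, one_div_one_div] at h
  calc ∫⁻ x, G x ^ θ ∂μ ≤ (∫⁻ x, (G x ^ θ) ^ (1/θ) ∂μ) ^ θ * (μ Set.univ) ^ (1 - θ) := h
    _ = (∫⁻ x, G x ∂μ) ^ θ * (μ Set.univ) ^ (1 - θ) := by
        congr 1
        congr 1
        refine lintegral_congr fun x => ?_
        rw [← ENNReal.rpow_mul, mul_one_div, div_self h0.ne', ENNReal.rpow_one]
/-- **Theorem 2 (i)**: let `1 < p ≤ 2` with conjugate exponent `p'`, let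
`0 < γ ≤ 2(α+1)/p`, and let `f` belong to the Besov-type space `B^{p,∞}_{γ,α}` on
the Jacobi hypergroup (i.e. `f ∈ L^p_A(ℝ₊)` with `sup_{x>0} ω_{A,p}(f)(x)/x^γ < ∞`).
Then `𝓕(f) ∈ L^s_c(ℝ₊)` for every `s` with
`2(α+1)p/(γp + 2(α+1)(p-1)) < s ≤ p'`. -/
theorem theorem_two_i (S : JacobiHypergroup) (p p' : ℝ) (hp : 1 < p) (hp2 : p ≤ 2)
    (hpp' : 1 / p + 1 / p' = 1) (γ : ℝ) (hγ : 0 < γ) (hγ2 : γ ≤ 2 * (S.α + 1) / p)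
    (f : ℝ → ℂ) (hf : MemW S.A p f)
    (hBesov : ∃ C : ℝ, ∀ x > (0 : ℝ), S.omega p f x ≤ C * x ^ γ)
    (s : ℝ) (hs1 : 2 * (S.α + 1) * p / (γ * p + 2 * (S.α + 1) * (p - 1)) < s)
    (hs2 : s ≤ p') :
    ∫⁻ x in Set.Ioi (0 : ℝ),
        ENNReal.ofReal (‖S.FT f x‖ ^ s * S.cden x) < ⊤ := by
  -- basic positivity facts
  have hα1 : (0:ℝ) < S.α + 1 := by linarith [S.hβα, S.hβ]
  have hp0 : (0:ℝ) < p := lt_trans one_pos hp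
  have hp'0 : (0:ℝ) < p' := by
    by_contra h
    push_neg at h
    have h1 : 1/p' ≤ 0 := by
      rcases eq_or_lt_of_le h with h' | h'
      · simp [h']
      · exact le_of_lt (div_neg_of_pos_of_neg one_pos h')
    have h2 : 1/p < 1 := by rw [div_lt_one hp0]; exact hp
    linarith
  have hinvp' : 1/p' = (p-1)/p := by
    have : 1/p' = 1 - 1/p := by linarith
    rw [this]; field_simp
  have hs0 : (0:ℝ) < s := by
    refine lt_trans ?_ hs1
    apply div_pos
    · positivity
    · have h1 : 0 < 2 * (S.α + 1) * (p - 1) := by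
        apply mul_pos (by positivity) (by linarith)
      have h2 : 0 < γ * p := by positivity
      linarith
  -- the Hausdorff-Young constant
  obtain ⟨C₁, hC₁pos, hHY⟩ := S.hHY p p' hp hp2 hpp'
  set F := S.FT f with hF
  set c := S.cden with hc
  have hcpos : ∀ lam : ℝ, 0 < lam → 0 < c lam := by
    intro lam hlam
    rcases le_or_gt lam S.k with hlk | hlk
    · have := (S.hcden_lo lam (by rwa [abs_of_pos hlam])).1
      have h2 : 0 < S.k₁ * |lam| ^ (2:ℝ) := by
        apply mul_pos S.hk₁
        exact Real.rpow_pos_of_pos (abs_pos.mpr hlam.ne') _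
      linarith
    · have := (S.hcden_hi lam (by rwa [abs_of_pos hlam])).1
      have h2 : 0 < S.k₁ * |lam| ^ (2*S.α+1) := by
        apply mul_pos S.hk₁
        exact Real.rpow_pos_of_pos (abs_pos.mpr hlam.ne') _
      linarith
  have hcnonneg : ∀ lam : ℝ, 0 ≤ lam → 0 ≤ c lam := by
    intro lam hlam
    rcases eq_or_lt_of_le hlam with h | h
    · have := (S.hcden_lo 0 (by simpa using S.hk.le)).1
      simp only [← h]
      have h0 : |(0:ℝ)| ^ (2:ℝ) = 0 := by
        simp [Real.zero_rpow (two_ne_zero)]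
      rw [abs_zero] at this
      rw [Real.zero_rpow (two_ne_zero)] at this
      simpa using this
    · exact (hcpos lam h).le
  -- global L^{p'} bound from Hausdorff-Young
  have raise : ∀ g : ℝ → ℂ, MemW S.A p g →
      ∫⁻ lam in Set.Ioi (0:ℝ), ENNReal.ofReal (‖S.FT g lam‖ ^ p' * c lam)
        ≤ ENNReal.ofReal (C₁ * wLpNorm S.A p g) ^ p' := by
    intro g hg
    have h := hHY g hg
    calc ∫⁻ lam in Set.Ioi (0:ℝ), ENNReal.ofReal (‖S.FT g lam‖ ^ p' * c lam)
        = ((∫⁻ lam in Set.Ioi (0:ℝ),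
            ENNReal.ofReal (‖S.FT g lam‖ ^ p' * c lam)) ^ (1/p')) ^ p' := by
          rw [← ENNReal.rpow_mul, one_div, inv_mul_cancel₀ hp'0.ne', ENNReal.rpow_one]
      _ ≤ (ENNReal.ofReal (C₁ * wLpNorm S.A p g)) ^ p' :=
          ENNReal.rpow_le_rpow h hp'0.le
  have hGlob : ∫⁻ lam in Set.Ioi (0:ℝ), ENNReal.ofReal (‖F lam‖ ^ p' * c lam)
      ≤ ENNReal.ofReal (C₁ * wLpNorm S.A p f) ^ p' := raise f hf
  have hGlobFin : ∫⁻ lam in Set.Ioi (0:ℝ),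
      ENNReal.ofReal (‖F lam‖ ^ p' * c lam) < ⊤ :=
    lt_of_le_of_lt hGlob (ENNReal.rpow_lt_top_of_nonneg hp'0.le ENNReal.ofReal_ne_top)
  -- the case s = p' is immediate
  rcases eq_or_lt_of_le hs2 with heq | hsp'
  · rw [heq]; exact hGlobFin
  -- now s < p'
  set θ := s / p' with hθ
  have hθ0 : 0 < θ := div_pos hs0 hp'0
  have hθ1 : θ < 1 := (div_lt_one hp'0).mpr hsp'
  -- Besov constant
  obtain ⟨CB₀, hCB₀⟩ := hBesov
  set CB := max CB₀ 0 with hCBdef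
  have hCBnn : 0 ≤ CB := le_max_right _ _
  have hCB : ∀ x > (0:ℝ), S.omega p f x ≤ CB * x ^ γ := by
    intro x hx
    refine le_trans (hCB₀ x hx) ?_
    have : (0:ℝ) ≤ x ^ γ := Real.rpow_nonneg hx.le _
    exact mul_le_mul_of_nonneg_right (le_max_left _ _) this
  set K := S.c₀⁻¹ * (C₁ * CB) with hK
  have hKnn : 0 ≤ K := by
    apply mul_nonneg (inv_nonneg.mpr S.hc₀.le)
    exact mul_nonneg hC₁pos.le hCBnn
  -- the dyadic block bound from Hausdorff-Young applied to τ_{1/r} f - f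
  have hBlock : ∀ r : ℝ, 0 < r →
      ∫⁻ lam in Set.Ioc r (2*r), ENNReal.ofReal (‖F lam‖ ^ p' * c lam)
        ≤ ENNReal.ofReal (K * (1/r) ^ γ) ^ p' := by
    intro r hr
    have hhpos : (0:ℝ) < 1/r := by positivity
    set g : ℝ → ℂ := fun y => S.τ (1/r) f y - f y with hgdef
    have hgmem : MemW S.A p g := S.hτ_diff p hp.le (1/r) f hf
    have hω : wLpNorm S.A p g ≤ CB * (1/r) ^ γ := hCB (1/r) hhpos
    have hsub : Set.Ioc r (2*r) ⊆ Set.Ioi (0:ℝ) := fun x hx => hr.trans hx.1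
    have hae : ∀ᵐ lam ∂(volume.restrict (Set.Ioc r (2*r))),
        ‖F lam‖ ^ p' * c lam
          ≤ S.c₀⁻¹ ^ p' * (‖S.FT g lam‖ ^ p' * c lam) := by
      have h1 : ∀ᵐ lam ∂(volume.restrict (Set.Ioi (0:ℝ))),
          S.FT (S.τ (1/r) f) lam = S.φ lam (1/r) * F lam := S.hτ_FT p hp.le hp2 (1/r) f hf
      have h2 := ae_restrict_of_ae_restrict_of_subset hsub h1
      filter_upwards [h2, ae_restrict_mem measurableSet_Ioc] with lam heq hmem
      have hlam0 : 0 < lam := hr.trans hmem.1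
      have hFTg : S.FT g lam = (S.φ lam (1/r) - 1) * F lam := by
        rw [hgdef, S.hFT_sub (S.τ (1/r) f) f lam, heq]; ring
      have habs : ‖S.FT g lam‖
          = ‖1 - S.φ lam (1/r)‖ * ‖F lam‖ := by
        rw [hFTg, norm_mul, norm_sub_rev]
      have hmin : min 1 ((lam * (1/r))^2) = 1 := by
        apply min_eq_left
        have h1r : 1 ≤ lam * (1/r) := by
          rw [mul_one_div, le_div_iff₀ hr]; linarith [hmem.1]
        nlinarith
      have hlow := S.hφ_lower lam (1/r) hhpos
      rw [hmin, mul_one] at hlow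
      have h3 : ‖F lam‖ ≤ S.c₀⁻¹ * ‖S.FT g lam‖ := by
        rw [habs, ← mul_assoc]
        have h1le : 1 ≤ S.c₀⁻¹ * ‖1 - S.φ lam (1/r)‖ := by
          rw [inv_mul_eq_div, le_div_iff₀ S.hc₀, one_mul]; exact hlow
        exact le_mul_of_one_le_left (norm_nonneg _) h1le
      have h4 : ‖F lam‖ ^ p' ≤ (S.c₀⁻¹ * ‖S.FT g lam‖) ^ p' :=
        Real.rpow_le_rpow (norm_nonneg _) h3 hp'0.le
      rw [Real.mul_rpow (inv_nonneg.mpr S.hc₀.le) (norm_nonneg _)] at h4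
      calc ‖F lam‖ ^ p' * c lam
          ≤ (S.c₀⁻¹ ^ p' * ‖S.FT g lam‖ ^ p') * c lam :=
            mul_le_mul_of_nonneg_right h4 (hcnonneg lam hlam0.le)
        _ = S.c₀⁻¹ ^ p' * (‖S.FT g lam‖ ^ p' * c lam) := by ring
    have hc₀p : (0:ℝ) ≤ S.c₀⁻¹ ^ p' := Real.rpow_nonneg (inv_nonneg.mpr S.hc₀.le) _
    calc ∫⁻ lam in Set.Ioc r (2*r), ENNReal.ofReal (‖F lam‖ ^ p' * c lam)
        ≤ ∫⁻ lam in Set.Ioc r (2*r),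
            ENNReal.ofReal (S.c₀⁻¹ ^ p' * (‖S.FT g lam‖ ^ p' * c lam)) :=
          lintegral_mono_ae (hae.mono fun lam hl => ENNReal.ofReal_le_ofReal hl)
      _ = ENNReal.ofReal (S.c₀⁻¹ ^ p') * ∫⁻ lam in Set.Ioc r (2*r),
            ENNReal.ofReal (‖S.FT g lam‖ ^ p' * c lam) := by
          simp_rw [ENNReal.ofReal_mul hc₀p]
          rw [lintegral_const_mul' _ _ ENNReal.ofReal_ne_top]
      _ ≤ ENNReal.ofReal (S.c₀⁻¹ ^ p') * ∫⁻ lam in Set.Ioi (0:ℝ),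
            ENNReal.ofReal (‖S.FT g lam‖ ^ p' * c lam) := by
          gcongr
      _ ≤ ENNReal.ofReal (S.c₀⁻¹ ^ p') * ENNReal.ofReal (C₁ * (CB * (1/r) ^ γ)) ^ p' := by
          gcongr
          refine le_trans (raise g hgmem) ?_
          gcongr
      _ = ENNReal.ofReal (K * (1/r) ^ γ) ^ p' := by
          rw [← ENNReal.ofReal_rpow_of_pos (inv_pos.mpr S.hc₀),
            ← ENNReal.mul_rpow_of_nonneg _ _ hp'0.le,
            ← ENNReal.ofReal_mul (inv_nonneg.mpr S.hc₀.le)]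
          congr 2
          rw [hK]; ring
  -- the block Hölder bound
  have hmeasG : Measurable fun lam => ENNReal.ofReal (‖F lam‖ ^ p' * c lam) := by
    have habs : Measurable fun lam => ‖F lam‖ :=
      continuous_norm.measurable.comp (S.hFT_meas f)
    exact ENNReal.measurable_ofReal.comp
      (((Real.continuous_rpow_const hp'0.le).measurable.comp habs).mul
        S.hcden_cont.measurable)
  have hHold : ∀ a b M : ℝ, 0 ≤ M → (∀ lam ∈ Set.Ioc a b, c lam ≤ M) →
      ∫⁻ lam in Set.Ioc a b, ENNReal.ofReal (‖F lam‖ ^ s * c lam)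
        ≤ ENNReal.ofReal M ^ (1-θ) *
          ((∫⁻ lam in Set.Ioc a b, ENNReal.ofReal (‖F lam‖ ^ p' * c lam)) ^ θ *
            ENNReal.ofReal (b - a) ^ (1-θ)) := by
    intro a b M hM hcM
    have hθ1' : (0:ℝ) ≤ 1 - θ := by linarith
    have hpt : ∀ lam ∈ Set.Ioc a b,
        ENNReal.ofReal (‖F lam‖ ^ s * c lam)
          ≤ ENNReal.ofReal (‖F lam‖ ^ p' * c lam) ^ θ
            * ENNReal.ofReal M ^ (1-θ) := by
      intro lam hlam
      rcases le_or_gt (c lam) 0 with hc0 | hc0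
      · have hnp : ‖F lam‖ ^ s * c lam ≤ 0 :=
          mul_nonpos_of_nonneg_of_nonpos (Real.rpow_nonneg (norm_nonneg _) _) hc0
        rw [ENNReal.ofReal_eq_zero.mpr hnp]
        exact zero_le
      · have habsnn : (0:ℝ) ≤ ‖F lam‖ := norm_nonneg _
        have hprod : (0:ℝ) ≤ ‖F lam‖ ^ p' * c lam :=
          mul_nonneg (Real.rpow_nonneg habsnn _) hc0.le
        have key : ‖F lam‖ ^ s * c lam
            ≤ (‖F lam‖ ^ p' * c lam) ^ θ * M ^ (1-θ) := by
          have e1 : ‖F lam‖ ^ s = (‖F lam‖ ^ p') ^ θ := by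
            rw [← Real.rpow_mul habsnn]
            congr 1
            rw [hθ]
            field_simp
          have e2 : c lam = c lam ^ θ * c lam ^ (1-θ) := by
            rw [← Real.rpow_add hc0]; simp
          calc ‖F lam‖ ^ s * c lam
              = ((‖F lam‖ ^ p') ^ θ * c lam ^ θ) * c lam ^ (1-θ) := by
                rw [← e1]
                nth_rewrite 1 [e2]
                ring
            _ = (‖F lam‖ ^ p' * c lam) ^ θ * c lam ^ (1-θ) := by
                rw [Real.mul_rpow (Real.rpow_nonneg habsnn _) hc0.le]
            _ ≤ (‖F lam‖ ^ p' * c lam) ^ θ * M ^ (1-θ) := by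
                apply mul_le_mul_of_nonneg_left ?_ (Real.rpow_nonneg hprod _)
                exact Real.rpow_le_rpow hc0.le (hcM lam hlam) hθ1'
        refine le_trans (ENNReal.ofReal_le_ofReal key) ?_
        rw [ENNReal.ofReal_mul (Real.rpow_nonneg hprod _),
          ← ENNReal.ofReal_rpow_of_nonneg hprod hθ0.le,
          ← ENNReal.ofReal_rpow_of_nonneg hM hθ1']
    calc ∫⁻ lam in Set.Ioc a b, ENNReal.ofReal (‖F lam‖ ^ s * c lam)
        ≤ ∫⁻ lam in Set.Ioc a b,
            ENNReal.ofReal (‖F lam‖ ^ p' * c lam) ^ θ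
              * ENNReal.ofReal M ^ (1-θ) := by
          apply lintegral_mono_ae
          filter_upwards [ae_restrict_mem measurableSet_Ioc] with lam hlam
          exact hpt lam hlam
      _ = ENNReal.ofReal M ^ (1-θ) * ∫⁻ lam in Set.Ioc a b,
            ENNReal.ofReal (‖F lam‖ ^ p' * c lam) ^ θ := by
          rw [← lintegral_const_mul' _ _
            (ENNReal.rpow_ne_top_of_nonneg hθ1' ENNReal.ofReal_ne_top)]
          simp_rw [mul_comm]
      _ ≤ _ := by
          gcongr
          have h := holder_aux (μ := volume.restrict (Set.Ioc a b))
            (fun lam => ENNReal.ofReal (‖F lam‖ ^ p' * c lam))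
            hmeasG.aemeasurable hθ0 hθ1
          simpa [Measure.restrict_apply_univ, Real.volume_Ioc] using h
  -- exponent arithmetic
  have hα2 : (0:ℝ) < 2*S.α+1 := by
    rcases eq_or_lt_of_le (le_trans S.hβ S.hβα) with h | h
    · exact absurd h.symm S.hα
    · linarith
  have hθval : θ = s * (p-1) / p := by
    rw [hθ, div_eq_mul_one_div, hinvp', mul_div_assoc]
  set E := (2*S.α+2) * (1-θ) - γ*s with hEdef
  have hE : E < 0 := by
    have hD : (0:ℝ) < γ*p + 2*(S.α+1)*(p-1) := by
      have h1 : 0 < 2 * (S.α + 1) * (p - 1) := mul_pos (by positivity) (by linarith)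
      have h2 : 0 < γ * p := by positivity
      linarith
    have h1 : 2*(S.α+1)*p < s * (γ*p + 2*(S.α+1)*(p-1)) := (div_lt_iff₀ hD).mp hs1
    have h2 : p * E = 2*(S.α+1)*p - s*(γ*p + 2*(S.α+1)*(p-1)) := by
      rw [hEdef, hθval]
      field_simp
      ring
    nlinarith [hp0]
  -- the constant for the dyadic blocks
  set m := max S.k 1 with hmdef
  have hm0 : (0:ℝ) < m := lt_of_lt_of_le one_pos (le_max_right _ _)
  have hmk : S.k ≤ m := le_max_left _ _
  set C₂ := S.k₂ ^ (1-θ) * (2:ℝ) ^ ((2*S.α+1)*(1-θ)) * K ^ s with hC₂def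
  have hC₂nn : 0 ≤ C₂ := by
    apply mul_nonneg (mul_nonneg (Real.rpow_nonneg S.hk₂.le _) (Real.rpow_nonneg two_pos.le _))
    exact Real.rpow_nonneg hKnn _
  have hθ1' : (0:ℝ) ≤ 1 - θ := by linarith
  -- the dyadic block bound in final form
  have hFinBlock : ∀ r : ℝ, m ≤ r →
      ∫⁻ lam in Set.Ioc r (2*r), ENNReal.ofReal (‖F lam‖ ^ s * c lam)
        ≤ ENNReal.ofReal (C₂ * r ^ E) := by
    intro r hmr
    have hr : (0:ℝ) < r := lt_of_lt_of_le hm0 hmr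
    set M := S.k₂ * (2*r) ^ (2*S.α+1) with hMdef
    have hM : (0:ℝ) ≤ M := mul_nonneg S.hk₂.le (Real.rpow_nonneg (by linarith) _)
    have hcM : ∀ lam ∈ Set.Ioc r (2*r), c lam ≤ M := by
      intro lam hlam
      have hlamk : S.k < |lam| := by
        rw [abs_of_pos (hr.trans hlam.1)]
        calc S.k ≤ m := hmk
          _ ≤ r := hmr
          _ < lam := hlam.1
      have h1 := (S.hcden_hi lam hlamk).2
      refine le_trans h1 ?_
      rw [hMdef]
      apply mul_le_mul_of_nonneg_left ?_ S.hk₂.le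
      apply Real.rpow_le_rpow (abs_nonneg _) ?_ hα2.le
      rw [abs_of_pos (hr.trans hlam.1)]
      exact hlam.2
    have h1 := hHold r (2*r) M hM hcM
    have h2 : (∫⁻ lam in Set.Ioc r (2*r),
        ENNReal.ofReal (‖F lam‖ ^ p' * c lam)) ^ θ
          ≤ ENNReal.ofReal (K * (1/r) ^ γ) ^ s := by
      calc (∫⁻ lam in Set.Ioc r (2*r),
          ENNReal.ofReal (‖F lam‖ ^ p' * c lam)) ^ θ
          ≤ (ENNReal.ofReal (K * (1/r) ^ γ) ^ p') ^ θ :=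
            ENNReal.rpow_le_rpow (hBlock r hr) hθ0.le
        _ = ENNReal.ofReal (K * (1/r) ^ γ) ^ s := by
            rw [← ENNReal.rpow_mul, hθ]
            congr 1
            field_simp
    have hKr : (0:ℝ) ≤ K * (1/r) ^ γ := mul_nonneg hKnn (Real.rpow_nonneg (by positivity) _)
    refine le_trans h1 ?_
    have h3 : ENNReal.ofReal M ^ (1-θ) *
        ((∫⁻ lam in Set.Ioc r (2*r),
          ENNReal.ofReal (‖F lam‖ ^ p' * c lam)) ^ θ *
            ENNReal.ofReal (2*r - r) ^ (1-θ))
        ≤ ENNReal.ofReal (M ^ (1-θ) * ((K * (1/r)^γ) ^ s * r ^ (1-θ))) := by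
      rw [ENNReal.ofReal_mul (Real.rpow_nonneg hM _),
        ENNReal.ofReal_mul (Real.rpow_nonneg hKr _),
        ← ENNReal.ofReal_rpow_of_nonneg hM hθ1',
        ← ENNReal.ofReal_rpow_of_nonneg hKr hs0.le,
        ← ENNReal.ofReal_rpow_of_nonneg hr.le hθ1']
      have h2r : (2*r - r) = r := by ring
      rw [h2r]
      exact mul_le_mul_right (mul_le_mul_left h2 _) _
    refine le_trans h3 (ENNReal.ofReal_le_ofReal (le_of_eq ?_))
    -- real rpow algebra
    rw [hMdef]
    have e1 : ((2:ℝ)*r) ^ (2*S.α+1) = (2:ℝ)^(2*S.α+1) * r^(2*S.α+1) :=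
      Real.mul_rpow (by norm_num) hr.le
    have e2 : ((1:ℝ)/r) ^ γ = r ^ (-γ) := by
      rw [one_div, Real.inv_rpow hr.le, ← Real.rpow_neg hr.le]
    rw [e1, e2,
      Real.mul_rpow S.hk₂.le (mul_nonneg (Real.rpow_nonneg (by norm_num) _)
        (Real.rpow_nonneg hr.le _)),
      Real.mul_rpow (Real.rpow_nonneg (by norm_num) _) (Real.rpow_nonneg hr.le _),
      Real.mul_rpow hKnn (Real.rpow_nonneg hr.le _),
      ← Real.rpow_mul (by norm_num : (0:ℝ) ≤ 2),
      ← Real.rpow_mul hr.le, ← Real.rpow_mul hr.le, hC₂def, hEdef]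
    rw [show (2*S.α+2) * (1-θ) - γ*s = (2*S.α+1)*(1-θ) + (-γ*s + (1-θ)) by ring,
      Real.rpow_add hr, Real.rpow_add hr]
    ring
  -- covering the tail by dyadic blocks
  have hcover : Set.Ioi (m:ℝ) ⊆ ⋃ n : ℕ, Set.Ioc (m * 2^n) (2 * (m * 2^n)) := by
    intro x hx
    have hx' : m < x := hx
    have hex : ∃ n : ℕ, x ≤ 2 * (m * 2^n) := by
      obtain ⟨n, hn⟩ := pow_unbounded_of_one_lt (x/m) one_lt_two
      refine ⟨n, ?_⟩
      rw [div_lt_iff₀ hm0] at hn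
      have ht : (0:ℝ) ≤ m * 2^n := by positivity
      linarith
    classical
    have hn := Nat.find_spec hex
    refine Set.mem_iUnion.mpr ⟨Nat.find hex, ?_, hn⟩
    rcases Nat.eq_zero_or_pos (Nat.find hex) with h0 | hposn
    · rw [h0]; simpa using hx'
    · have hmin := Nat.find_min hex (Nat.sub_lt hposn one_pos)
      push_neg at hmin
      have he : 2 * (m * 2 ^ (Nat.find hex - 1)) = m * 2 ^ (Nat.find hex) := by
        conv_rhs => rw [← Nat.succ_pred_eq_of_pos hposn, pow_succ]
        rw [Nat.pred_eq_sub_one]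
        ring
      linarith [he ▸ hmin]
  -- sum over the dyadic blocks
  have hq1 : ENNReal.ofReal ((2:ℝ)^E) < 1 :=
    ENNReal.ofReal_lt_one.mpr (Real.rpow_lt_one_of_one_lt_of_neg one_lt_two hE)
  have htail : ∫⁻ lam in Set.Ioi m, ENNReal.ofReal (‖F lam‖ ^ s * c lam) < ⊤ := by
    calc ∫⁻ lam in Set.Ioi m, ENNReal.ofReal (‖F lam‖ ^ s * c lam)
        ≤ ∫⁻ lam in ⋃ n : ℕ, Set.Ioc (m * 2^n) (2 * (m * 2^n)),
            ENNReal.ofReal (‖F lam‖ ^ s * c lam) :=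
          lintegral_mono_set hcover
      _ ≤ ∑' n : ℕ, ∫⁻ lam in Set.Ioc (m * 2^n) (2 * (m * 2^n)),
            ENNReal.ofReal (‖F lam‖ ^ s * c lam) :=
          lintegral_iUnion_le _ _
      _ ≤ ∑' n : ℕ, ENNReal.ofReal (C₂ * (m * 2^n) ^ E) := by
          apply ENNReal.tsum_le_tsum
          intro n
          apply hFinBlock
          calc m = m * 2^0 := by norm_num
            _ ≤ m * 2^n := by
                apply mul_le_mul_of_nonneg_left ?_ hm0.le
                exact pow_le_pow_right₀ (by norm_num) (Nat.zero_le n)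
      _ = ∑' n : ℕ, ENNReal.ofReal (C₂ * m ^ E) * ENNReal.ofReal ((2:ℝ)^E) ^ n := by
          congr 1
          funext n
          have e1 : ((m * 2^n : ℝ)) ^ E = m ^ E * ((2:ℝ)^E) ^ n := by
            rw [Real.mul_rpow hm0.le (by positivity),
              ← Real.rpow_natCast (2:ℝ) n, ← Real.rpow_natCast ((2:ℝ)^E) n,
              ← Real.rpow_mul (by norm_num : (0:ℝ) ≤ 2),
              ← Real.rpow_mul (by norm_num : (0:ℝ) ≤ 2), mul_comm E (n:ℝ)]
          rw [e1, ← mul_assoc,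
            ENNReal.ofReal_mul (mul_nonneg hC₂nn (Real.rpow_nonneg hm0.le _)),
            ENNReal.ofReal_pow (Real.rpow_nonneg (by norm_num) _)]
      _ = ENNReal.ofReal (C₂ * m ^ E) * ∑' n : ℕ, ENNReal.ofReal ((2:ℝ)^E) ^ n :=
          ENNReal.tsum_mul_left
      _ < ⊤ := by
          rw [ENNReal.tsum_geometric]
          apply ENNReal.mul_lt_top ENNReal.ofReal_lt_top
          rw [ENNReal.inv_lt_top]
          exact tsub_pos_of_lt hq1
  -- the compact part
  obtain ⟨M₀, hM₀⟩ := (isCompact_Icc (a := (0:ℝ)) (b := m)).bddAbove_image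
    S.hcden_cont.continuousOn
  have hM₀' : ∀ lam ∈ Set.Ioc (0:ℝ) m, c lam ≤ max M₀ 0 := by
    intro lam hlam
    refine le_trans ?_ (le_max_left _ _)
    exact hM₀ (Set.mem_image_of_mem _ (Set.mem_Icc.mpr ⟨hlam.1.le, hlam.2⟩))
  have hlow : ∫⁻ lam in Set.Ioc (0:ℝ) m, ENNReal.ofReal (‖F lam‖ ^ s * c lam)
      < ⊤ := by
    refine lt_of_le_of_lt (hHold 0 m (max M₀ 0) (le_max_right _ _) hM₀') ?_
    apply ENNReal.mul_lt_top
    · exact ENNReal.rpow_lt_top_of_nonneg hθ1' ENNReal.ofReal_ne_top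
    apply ENNReal.mul_lt_top
    · apply ENNReal.rpow_lt_top_of_nonneg hθ0.le
      refine ne_of_lt (lt_of_le_of_lt ?_ hGlobFin)
      exact lintegral_mono_set Set.Ioc_subset_Ioi_self
    · exact ENNReal.rpow_lt_top_of_nonneg hθ1' ENNReal.ofReal_ne_top
  -- combine
  calc ∫⁻ lam in Set.Ioi (0:ℝ), ENNReal.ofReal (‖F lam‖ ^ s * c lam)
      = ∫⁻ lam in Set.Ioc 0 m ∪ Set.Ioi m,
          ENNReal.ofReal (‖F lam‖ ^ s * c lam) := by
        rw [Set.Ioc_union_Ioi_eq_Ioi hm0.le]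
    _ ≤ (∫⁻ lam in Set.Ioc (0:ℝ) m, ENNReal.ofReal (‖F lam‖ ^ s * c lam))
        + ∫⁻ lam in Set.Ioi m, ENNReal.ofReal (‖F lam‖ ^ s * c lam) :=
        lintegral_union_le _ _ _
    _ < ⊤ := ENNReal.add_lt_top.mpr ⟨hlow, htail⟩
end

section
/- Theorem 2 (ii): Let 1 < p ≤ 2, let γ > 2(α+1)/p, and let f belong to the Besov-type space B^{p,∞}_{γ,α} on the Jacobi hypergroup. Then 𝓕(f) ∈ L¹_c(ℝ₊), i.e. ∫₀^∞ |𝓕(f)(x)| dx/|c(x)|² < ∞. -/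
open MeasureTheory Set Filter

namespace JacobiHypergroup

lemma two_alpha_one_nonneg (S : JacobiHypergroup) : (0:ℝ) ≤ 2 * S.α + 1 := by
  have h1 := S.hβα; have h2 := S.hβ; linarith

lemma cden_pos (S : JacobiHypergroup) {x : ℝ} (hx : 0 < x) : 0 < S.cden x := by
  have habs : |x| = x := abs_of_pos hx
  rcases le_or_gt x S.k with h | h
  · have h1 := (S.hcden_lo x (by rwa [habs])).1
    have h2 : 0 < S.k₁ * |x| ^ (2:ℝ) :=
      mul_pos S.hk₁ (Real.rpow_pos_of_pos (abs_pos.2 hx.ne') _)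
    linarith
  · have h1 := (S.hcden_hi x (by rwa [habs])).1
    have h2 : 0 < S.k₁ * |x| ^ (2*S.α+1) :=
      mul_pos S.hk₁ (Real.rpow_pos_of_pos (abs_pos.2 hx.ne') _)
    linarith

lemma A_nonneg (S : JacobiHypergroup) {x : ℝ} (hx : 0 < x) : 0 ≤ S.A x := by
  rw [S.hA x hx.le]
  exact mul_nonneg (mul_nonneg (Real.rpow_nonneg (by norm_num) _)
    (Real.rpow_nonneg (Real.sinh_pos_iff.2 hx).le _)) (Real.rpow_nonneg (Real.cosh_pos x).le _)

lemma wLpNorm_nonneg (S : JacobiHypergroup) (p : ℝ) (f : ℝ → ℂ) :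
    0 ≤ wLpNorm S.A p f := by
  refine Real.rpow_nonneg (setIntegral_nonneg measurableSet_Ioi fun x hx => ?_) _
  exact mul_nonneg (Real.rpow_nonneg (norm_nonneg _) _) (S.A_nonneg hx)

lemma core_holder (S : JacobiHypergroup) {p p' : ℝ} (hcon : Real.HolderConjugate p' p)
    (g : ℝ → ℂ) {I : Set ℝ} (hI : MeasurableSet I) (hIsub : I ⊆ Set.Ioi (0:ℝ)) :
    ∫⁻ lam in I, ENNReal.ofReal (‖S.FT g lam‖ * S.cden lam)
      ≤ (∫⁻ lam in Set.Ioi (0:ℝ),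
            ENNReal.ofReal (‖S.FT g lam‖ ^ p' * S.cden lam)) ^ (1/p')
        * (∫⁻ lam in I, ENNReal.ofReal (S.cden lam)) ^ (1/p) := by
  set F : ℝ → ENNReal := fun lam => ENNReal.ofReal (‖S.FT g lam‖) with hF
  set Cd : ℝ → ENNReal := fun lam => ENNReal.ofReal (S.cden lam) with hCd
  have hFmeas : Measurable F :=
    ENNReal.measurable_ofReal.comp (continuous_norm.measurable.comp (S.hFT_meas g))
  have hCdmeas : Measurable Cd := ENNReal.measurable_ofReal.comp S.hcden_cont.measurable
  have hp'pos : 0 < p' := hcon.pos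
  have hppos : 0 < p := hcon.symm.pos
  have step1 : ∫⁻ lam in I, ENNReal.ofReal (‖S.FT g lam‖ * S.cden lam)
      = ∫⁻ lam in I,
          ((fun l => F l * Cd l ^ (1/p')) * (fun l => Cd l ^ (1/p))) lam := by
    refine setLIntegral_congr_fun hI (fun lam hlam => ?_)
    have hc : 0 < S.cden lam := S.cden_pos (hIsub hlam)
    have hCne : Cd lam ≠ 0 := by
      simp only [hCd, ne_eq, ENNReal.ofReal_eq_zero, not_le]; exact hc
    have hCnt : Cd lam ≠ ⊤ := ENNReal.ofReal_ne_top
    have hsum : Cd lam ^ (1/p') * Cd lam ^ (1/p) = Cd lam := by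
      rw [← ENNReal.rpow_add _ _ hCne hCnt,
        show 1/p' + 1/p = 1 by
          rw [one_div, one_div]; linarith [hcon.inv_add_inv_eq_one],
        ENNReal.rpow_one]
    calc ENNReal.ofReal (‖S.FT g lam‖ * S.cden lam)
        = F lam * Cd lam := ENNReal.ofReal_mul (norm_nonneg _)
      _ = F lam * (Cd lam ^ (1/p') * Cd lam ^ (1/p)) := by rw [hsum]
      _ = _ := by simp [mul_assoc]
  rw [step1]
  have holder := ENNReal.lintegral_mul_le_Lp_mul_Lq (volume.restrict I) hcon
    ((hFmeas.mul (hCdmeas.pow (measurable_const (a := (1/p' : ℝ))))).aemeasurable)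
    ((hCdmeas.pow (measurable_const (a := (1/p : ℝ)))).aemeasurable)
  refine holder.trans (mul_le_mul' ?_ (le_of_eq ?_))
  · -- first factor
    have heq : ∫⁻ lam in I, (F lam * Cd lam ^ (1/p')) ^ p'
        = ∫⁻ lam in I, ENNReal.ofReal (‖S.FT g lam‖ ^ p' * S.cden lam) := by
      refine setLIntegral_congr_fun hI (fun lam hlam => ?_)
      have hc : 0 ≤ S.cden lam := (S.cden_pos (hIsub hlam)).le
      rw [ENNReal.mul_rpow_of_nonneg _ _ hp'pos.le, ← ENNReal.rpow_mul,
        one_div_mul_cancel hp'pos.ne', ENNReal.rpow_one,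
        ENNReal.ofReal_rpow_of_nonneg (norm_nonneg _) hp'pos.le,
        ← ENNReal.ofReal_mul (Real.rpow_nonneg (norm_nonneg _) _)]
    simp only [Pi.mul_apply]; rw [heq]
    refine ENNReal.rpow_le_rpow ?_ (by positivity)
    exact lintegral_mono_set hIsub
  · -- second factor
    refine congrArg (· ^ (1/p)) (lintegral_congr fun lam => ?_)
    rw [← ENNReal.rpow_mul, one_div_mul_cancel hppos.ne', ENNReal.rpow_one]

end JacobiHypergroup

lemma calc_geom {k k2 c0i CH CB α γ p : ℝ} (hk : 0 < k) (hk2 : 0 ≤ k2) (j : ℕ) :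
    c0i * ((CH * (CB * ((k * 2^j)⁻¹) ^ γ)) *
        (k2 * (k * 2^(j+1)) ^ (2*α+1) * (k * 2^j)) ^ (1/p))
      = (c0i * CH * CB * (k ^ (-γ) * (k2 * (2*k) ^ (2*α+1) * k) ^ (1/p)))
        * ((2:ℝ) ^ ((2*α+2) * (1/p) - γ)) ^ j := by
  have hx : (0:ℝ) < 2^j := by positivity
  have hkx : (0:ℝ) < k * 2^j := by positivity
  rw [Real.inv_rpow hkx.le, ← Real.rpow_neg hkx.le, Real.mul_rpow hk.le hx.le,
    show k * (2:ℝ)^(j+1) = (2*k) * 2^j by rw [pow_succ]; ring,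
    Real.mul_rpow (by positivity : (0:ℝ) ≤ 2*k) hx.le,
    show k2 * ((2*k)^(2*α+1) * ((2:ℝ)^j)^(2*α+1)) * (k*2^j)
        = (k2 * (2*k)^(2*α+1) * k) * (((2:ℝ)^j)^(2*α+1) * ((2:ℝ)^j)^(1:ℝ)) by
      rw [Real.rpow_one]; ring,
    ← Real.rpow_add hx, show 2*α+1+(1:ℝ) = 2*α+2 by ring,
    Real.mul_rpow (by positivity) (Real.rpow_nonneg hx.le _), ← Real.rpow_mul hx.le,
    ← Real.rpow_natCast ((2:ℝ) ^ ((2*α+2)*(1/p) - γ)) j,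
    ← Real.rpow_mul (by norm_num : (0:ℝ) ≤ 2),
    mul_comm ((2*α+2)*(1/p) - γ) (j:ℝ),
    Real.rpow_mul (by norm_num : (0:ℝ) ≤ 2), Real.rpow_natCast,
    show ((2:ℝ)^j) ^ ((2*α+2)*(1/p) - γ)
        = ((2:ℝ)^j)^((2*α+2)*(1/p)) * ((2:ℝ)^j)^(-γ) by
      rw [← Real.rpow_add hx, sub_eq_add_neg]]
  ring

/-- **Theorem 2 (ii)**: let `1 < p ≤ 2`, let `γ > 2(α+1)/p`, and let `f` belong to
the Besov-type space `B^{p,∞}_{γ,α}` on the Jacobi hypergroup (i.e.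
`f ∈ L^p_A(ℝ₊)` with `sup_{x>0} ω_{A,p}(f)(x)/x^γ < ∞`).  Then
`𝓕(f) ∈ L¹_c(ℝ₊)`, that is, `∫₀^∞ |𝓕(f)(x)| dx/|c(x)|² < ∞`. -/
theorem theorem_two_ii (S : JacobiHypergroup) (p : ℝ) (hp : 1 < p) (hp2 : p ≤ 2)
    (γ : ℝ) (hγ : 2 * (S.α + 1) / p < γ)
    (f : ℝ → ℂ) (hf : MemW S.A p f)
    (hBesov : ∃ C : ℝ, ∀ x > (0 : ℝ), S.omega p f x ≤ C * x ^ γ) :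
    ∫⁻ x in Set.Ioi (0 : ℝ),
        ENNReal.ofReal (‖S.FT f x‖ * S.cden x) < ⊤ := by
  classical
  obtain ⟨CB, hCB⟩ := hBesov
  have hCB0 : 0 ≤ CB := by
    have h1 := hCB 1 one_pos
    have h2 : 0 ≤ S.omega p f 1 := S.wLpNorm_nonneg p _
    rw [Real.one_rpow, mul_one] at h1; linarith
  have hp0 : (0:ℝ) < p := lt_trans one_pos hp
  have hp1 : (0:ℝ) < p - 1 := by linarith
  set p' : ℝ := p / (p - 1) with hp'def
  have hcon : Real.HolderConjugate p' p := by
    rw [Real.holderConjugate_iff]; constructor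
    · rw [hp'def, lt_div_iff₀ hp1]; linarith
    · rw [hp'def]; field_simp; ring
  have hp'pos : 0 < p' := hcon.pos
  obtain ⟨CH, hCHpos, hHY⟩ := S.hHY p p' hp hp2 (by
    have := hcon.inv_add_inv_eq_one
    rw [one_div, one_div]; linarith)
  have hsplit : (∫⁻ x in Set.Ioi (0:ℝ),
        ENNReal.ofReal (‖S.FT f x‖ * S.cden x))
      = (∫⁻ x in Set.Ioc (0:ℝ) S.k,
          ENNReal.ofReal (‖S.FT f x‖ * S.cden x))
        + ∫⁻ x in Set.Ioi S.k,
            ENNReal.ofReal (‖S.FT f x‖ * S.cden x) := by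
    rw [← lintegral_union measurableSet_Ioi (Set.Ioc_disjoint_Ioi le_rfl),
      Set.Ioc_union_Ioi_eq_Ioi S.hk.le]
  rw [hsplit]
  have hlow : (∫⁻ x in Set.Ioc (0:ℝ) S.k,
      ENNReal.ofReal (‖S.FT f x‖ * S.cden x)) < ⊤ := by
    refine lt_of_le_of_lt
      (S.core_holder hcon f measurableSet_Ioc Set.Ioc_subset_Ioi_self) ?_
    refine ENNReal.mul_lt_top (lt_of_le_of_lt (hHY f hf) ENNReal.ofReal_lt_top) ?_
    refine ENNReal.rpow_lt_top_of_nonneg (by positivity) ?_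
    have hb : (∫⁻ lam in Set.Ioc (0:ℝ) S.k, ENNReal.ofReal (S.cden lam))
        ≤ ∫⁻ _lam in Set.Ioc (0:ℝ) S.k, ENNReal.ofReal (S.k₂ * S.k ^ (2:ℝ)) := by
      refine setLIntegral_mono measurable_const fun x hx => ?_
      refine ENNReal.ofReal_le_ofReal ?_
      have habs : |x| = x := abs_of_pos hx.1
      refine ((S.hcden_lo x (by rw [habs]; exact hx.2)).2).trans ?_
      refine mul_le_mul_of_nonneg_left ?_ S.hk₂.le
      rw [habs]
      exact Real.rpow_le_rpow hx.1.le hx.2 (by norm_num)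
    rw [setLIntegral_const] at hb
    exact (hb.trans_lt
      (ENNReal.mul_lt_top ENNReal.ofReal_lt_top (measure_Ioc_lt_top))).ne
  have hhigh : (∫⁻ x in Set.Ioi S.k,
      ENNReal.ofReal (‖S.FT f x‖ * S.cden x)) < ⊤ := by
    set aj : ℕ → ℝ := fun j => S.k * 2 ^ j with haj
    have haj_pos : ∀ j, 0 < aj j := fun j =>
      mul_pos S.hk (by positivity)
    have haj_mono : ∀ {m n : ℕ}, m ≤ n → aj m ≤ aj n := fun {m n} h => by
      simp only [haj]
      exact mul_le_mul_of_nonneg_left (pow_le_pow_right₀ (by norm_num) h) S.hk.le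
    have hk_le : ∀ j, S.k ≤ aj j := fun j => by
      calc S.k = aj 0 := by simp [haj]
        _ ≤ aj j := haj_mono (Nat.zero_le j)
    have hunion : Set.Ioi S.k = ⋃ j : ℕ, Set.Ioc (aj j) (aj (j+1)) := by
      ext x
      simp only [Set.mem_Ioi, Set.mem_iUnion, Set.mem_Ioc]
      constructor
      · intro hx
        have hex : ∃ n : ℕ, x ≤ aj (n+1) := by
          obtain ⟨n, hn⟩ := pow_unbounded_of_one_lt (x / S.k) (one_lt_two (α := ℝ))
          refine ⟨n, ?_⟩
          have hxn : x < S.k * 2 ^ n := by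
            rw [div_lt_iff₀ S.hk] at hn; linarith [hn]
          exact hxn.le.trans (haj_mono (Nat.le_succ n))
        refine ⟨Nat.find hex, ?_, Nat.find_spec hex⟩
        rcases Nat.eq_zero_or_pos (Nat.find hex) with h0 | h0
        · rw [h0]; simpa [haj] using hx
        · obtain ⟨m, hm⟩ := Nat.exists_eq_succ_of_ne_zero h0.ne'
          have hmin := Nat.find_min hex (m := m) (by omega)
          push_neg at hmin
          rw [hm]; exact hmin
      · rintro ⟨j, h1, _⟩
        exact lt_of_le_of_lt (hk_le j) h1
    have hdisj : Pairwise (Function.onFun Disjoint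
        fun j : ℕ => Set.Ioc (aj j) (aj (j+1))) := by
      intro i j hij
      rw [Function.onFun, Set.Ioc_disjoint_Ioc]
      rcases lt_or_gt_of_ne hij with h | h
      · exact le_trans (min_le_left _ _) (le_trans (haj_mono h) (le_max_right _ _))
      · exact le_trans (min_le_right _ _) (le_trans (haj_mono h) (le_max_left _ _))
    rw [hunion, lintegral_iUnion (fun j => measurableSet_Ioc) hdisj]
    set s : ℝ := (2*S.α+2) * (1/p) - γ with hs
    have hsneg : s < 0 := by
      have h1 : (2*S.α+2) * (1/p) = 2*(S.α+1)/p := by ring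
      rw [hs, h1]; linarith
    set r : ℝ := (2:ℝ) ^ s with hr
    have hrpos : 0 < r := Real.rpow_pos_of_pos two_pos s
    have hrlt : r < 1 := Real.rpow_lt_one_of_one_lt_of_neg one_lt_two hsneg
    set D : ℝ := S.c₀⁻¹ * CH * CB *
      (S.k ^ (-γ) * (S.k₂ * (2*S.k) ^ (2*S.α+1) * S.k) ^ (1/p)) with hD
    have hterm : ∀ j : ℕ, (∫⁻ x in Set.Ioc (aj j) (aj (j+1)),
        ENNReal.ofReal (‖S.FT f x‖ * S.cden x))
        ≤ ENNReal.ofReal (D * r ^ j) := by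
      intro j
      set t : ℝ := (aj j)⁻¹ with ht
      have htpos : 0 < t := by rw [ht]; exact inv_pos.2 (haj_pos j)
      set gj : ℝ → ℂ := fun y => S.τ t f y - f y with hgj
      have hgjmem : MemW S.A p gj := S.hτ_diff p hp.le t f hf
      have hIsub : Set.Ioc (aj j) (aj (j+1)) ⊆ Set.Ioi (0:ℝ) := fun x hx =>
        lt_trans (haj_pos j) hx.1
      have hstepA : (∫⁻ x in Set.Ioc (aj j) (aj (j+1)),
          ENNReal.ofReal (‖S.FT f x‖ * S.cden x))
          ≤ ENNReal.ofReal S.c₀⁻¹ *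
            ∫⁻ x in Set.Ioc (aj j) (aj (j+1)),
              ENNReal.ofReal (‖S.FT gj x‖ * S.cden x) := by
        rw [← lintegral_const_mul' _ _ ENNReal.ofReal_ne_top]
        refine lintegral_mono_ae ?_
        have hae := S.hτ_FT p hp.le hp2 t f hf
        have hae' : ∀ᵐ lam ∂(volume.restrict (Set.Ioc (aj j) (aj (j+1)))),
            S.FT (S.τ t f) lam = S.φ lam t * S.FT f lam :=
          hae.filter_mono (ae_mono (Measure.restrict_mono hIsub le_rfl))
        filter_upwards [hae', ae_restrict_mem measurableSet_Ioc] with lam h1 h2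
        have hlampos : 0 < lam := lt_trans (haj_pos j) h2.1
        have hcden := (S.cden_pos hlampos).le
        have h3 : S.FT gj lam = (S.φ lam t - 1) * S.FT f lam := by
          rw [hgj, S.hFT_sub (S.τ t f) f lam, h1]; ring
        have h4 : ‖S.FT gj lam‖
            = ‖1 - S.φ lam t‖ * ‖S.FT f lam‖ := by
          rw [h3, norm_mul, norm_sub_rev]
        have h5 : (1:ℝ) ≤ (lam * t)^2 := by
          have h5' : 1 < lam * t := by
            rw [ht, ← div_eq_mul_inv, lt_div_iff₀ (haj_pos j), one_mul]
            exact h2.1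
          nlinarith
        have h6 := S.hφ_lower lam t htpos
        rw [min_eq_left h5, mul_one] at h6
        have h7 : S.c₀ * ‖S.FT f lam‖ ≤ ‖S.FT gj lam‖ := by
          rw [h4]; exact mul_le_mul_of_nonneg_right h6 (norm_nonneg _)
        have h8 : ‖S.FT f lam‖ * S.cden lam
            ≤ S.c₀⁻¹ * (‖S.FT gj lam‖ * S.cden lam) := by
          have h9 := mul_le_mul_of_nonneg_right h7 hcden
          rw [inv_mul_eq_div, le_div_iff₀ S.hc₀]
          calc ‖S.FT f lam‖ * S.cden lam * S.c₀
              = S.c₀ * ‖S.FT f lam‖ * S.cden lam := by ring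
            _ ≤ _ := h9
        calc ENNReal.ofReal (‖S.FT f lam‖ * S.cden lam)
            ≤ ENNReal.ofReal (S.c₀⁻¹ * (‖S.FT gj lam‖ * S.cden lam)) :=
              ENNReal.ofReal_le_ofReal h8
          _ = ENNReal.ofReal S.c₀⁻¹ *
              ENNReal.ofReal (‖S.FT gj lam‖ * S.cden lam) :=
              ENNReal.ofReal_mul (inv_nonneg.2 S.hc₀.le)
      have hcore := S.core_holder hcon gj measurableSet_Ioc hIsub
      have homega : wLpNorm S.A p gj ≤ CB * t ^ γ := hCB t htpos
      have hfac1 : (∫⁻ lam in Set.Ioi (0:ℝ),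
            ENNReal.ofReal (‖S.FT gj lam‖ ^ p' * S.cden lam)) ^ (1/p')
          ≤ ENNReal.ofReal (CH * (CB * t ^ γ)) := by
        refine (hHY gj hgjmem).trans (ENNReal.ofReal_le_ofReal ?_)
        have := mul_le_mul_of_nonneg_left homega hCHpos.le
        linarith
      have hfac2 : (∫⁻ lam in Set.Ioc (aj j) (aj (j+1)),
            ENNReal.ofReal (S.cden lam)) ^ (1/p)
          ≤ ENNReal.ofReal ((S.k₂ * aj (j+1) ^ (2*S.α+1) * aj j) ^ (1/p)) := by
        have hbr : (0:ℝ) ≤ S.k₂ * aj (j+1) ^ (2*S.α+1) :=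
          mul_nonneg S.hk₂.le (Real.rpow_nonneg (haj_pos (j+1)).le _)
        rw [← ENNReal.ofReal_rpow_of_nonneg
          (mul_nonneg hbr (haj_pos j).le) (by positivity)]
        refine ENNReal.rpow_le_rpow ?_ (by positivity)
        have hb : (∫⁻ lam in Set.Ioc (aj j) (aj (j+1)), ENNReal.ofReal (S.cden lam))
            ≤ ∫⁻ _lam in Set.Ioc (aj j) (aj (j+1)),
                ENNReal.ofReal (S.k₂ * aj (j+1) ^ (2*S.α+1)) := by
          refine setLIntegral_mono measurable_const fun x hx => ?_
          refine ENNReal.ofReal_le_ofReal ?_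
          have hxpos : 0 < x := lt_trans (haj_pos j) hx.1
          have habs : |x| = x := abs_of_pos hxpos
          have hkx : S.k < |x| := by
            rw [habs]; exact lt_of_le_of_lt (hk_le j) hx.1
          refine ((S.hcden_hi x hkx).2).trans ?_
          refine mul_le_mul_of_nonneg_left ?_ S.hk₂.le
          rw [habs]
          exact Real.rpow_le_rpow hxpos.le hx.2 S.two_alpha_one_nonneg
        rw [setLIntegral_const, Real.volume_Ioc] at hb
        refine hb.trans (le_of_eq ?_)
        rw [← ENNReal.ofReal_mul hbr]
        congr 1
        have hdiff : aj (j+1) - aj j = aj j := by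
          simp only [haj]; rw [pow_succ]; ring
        rw [hdiff]
      have hcomb : (∫⁻ x in Set.Ioc (aj j) (aj (j+1)),
          ENNReal.ofReal (‖S.FT f x‖ * S.cden x))
          ≤ ENNReal.ofReal S.c₀⁻¹ * (ENNReal.ofReal (CH * (CB * t ^ γ)) *
              ENNReal.ofReal ((S.k₂ * aj (j+1) ^ (2*S.α+1) * aj j) ^ (1/p))) :=
        hstepA.trans (mul_le_mul_right
          (hcore.trans (mul_le_mul' hfac1 hfac2)) _)
      refine hcomb.trans ?_
      have hXnn : (0:ℝ) ≤ CH * (CB * t ^ γ) :=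
        mul_nonneg hCHpos.le (mul_nonneg hCB0 (Real.rpow_nonneg htpos.le _))
      rw [← ENNReal.ofReal_mul hXnn, ← ENNReal.ofReal_mul (inv_nonneg.2 S.hc₀.le)]
      refine ENNReal.ofReal_le_ofReal (le_of_eq ?_)
      simp only [ht, haj, hD, hr, hs]
      exact calc_geom S.hk S.hk₂.le j
    calc (∑' j : ℕ, ∫⁻ x in Set.Ioc (aj j) (aj (j+1)),
          ENNReal.ofReal (‖S.FT f x‖ * S.cden x))
        ≤ ∑' j : ℕ, ENNReal.ofReal (D * r ^ j) := ENNReal.tsum_le_tsum hterm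
      _ = ENNReal.ofReal D * ∑' j : ℕ, (ENNReal.ofReal r) ^ j := by
          rw [← ENNReal.tsum_mul_left]
          refine tsum_congr fun j => ?_
          rw [ENNReal.ofReal_mul' (by positivity), ENNReal.ofReal_pow hrpos.le]
      _ = ENNReal.ofReal D * (1 - ENNReal.ofReal r)⁻¹ := by
          rw [ENNReal.tsum_geometric]
      _ < ⊤ := by
          refine ENNReal.mul_lt_top ENNReal.ofReal_lt_top ?_
          refine ENNReal.inv_lt_top.2 ?_
          rw [tsub_pos_iff_lt]
          exact ENNReal.ofReal_lt_one.2 hrlt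
  exact ENNReal.add_lt_top.2 ⟨hlow, hhigh⟩
end

section
/- Tail estimate in the proof of Theorem 2 (i): Let 1 < p ≤ 2 with conjugate exponent p', let 0 < γ ≤ 2(α+1)/p, let f belong to the Besov-type space B^{p,∞}_{γ,α} on the Jacobi hypergroup, and let s satisfy 2(α+1)p/(γp + 2(α+1)(p−1)) < s ≤ p'. Then there is a constant c > 0 such that for all t > k, ∫_k^t |𝓕(f)(x)|^s dx/|c(x)|² ≤ c ( t^{−γs + 2(α+1)(1 − s/p')} + 1 ), where k is the constant from the c-function estimates. -/
open MeasureTheory Set Filter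

set_option maxHeartbeats 1600000 in
/-- **Tail estimate in the proof of Theorem 2 (i)**: let `1 < p ≤ 2` with conjugate
exponent `p'`, let `0 < γ ≤ 2(α+1)/p`, let `f` belong to the Besov-type space
`B^{p,∞}_{γ,α}` on the Jacobi hypergroup, and let `s` satisfy
`2(α+1)p/(γp + 2(α+1)(p-1)) < s ≤ p'`.  Then there is a constant `c > 0` such that
for all `t > k`,
`∫_k^t |𝓕(f)(x)|^s dx/|c(x)|² ≤ c ( t^(-γs + 2(α+1)(1 - s/p')) + 1 )`,
where `k` is the constant from the `c`-function estimates. -/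
theorem theorem_two_i_tail (S : JacobiHypergroup) (p p' : ℝ) (hp : 1 < p)
    (hp2 : p ≤ 2) (hpp' : 1 / p + 1 / p' = 1) (γ : ℝ) (hγ : 0 < γ)
    (hγ2 : γ ≤ 2 * (S.α + 1) / p)
    (f : ℝ → ℂ) (hf : MemW S.A p f)
    (hBesov : ∃ C : ℝ, ∀ x > (0 : ℝ), S.omega p f x ≤ C * x ^ γ)
    (s : ℝ) (hs1 : 2 * (S.α + 1) * p / (γ * p + 2 * (S.α + 1) * (p - 1)) < s)
    (hs2 : s ≤ p') :
    ∃ c > (0 : ℝ), ∀ t > S.k,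
      ∫⁻ x in Set.Ioo S.k t,
          ENNReal.ofReal (‖S.FT f x‖ ^ s * S.cden x)
        ≤ ENNReal.ofReal (c * (t ^ (-(γ * s) + 2 * (S.α + 1) * (1 - s / p')) + 1)) := by
  classical
  obtain ⟨CH, hCHpos, hHY⟩ := S.hHY p p' hp hp2 hpp'
  obtain ⟨CB0, hCB0⟩ := hBesov
  set CB : ℝ := max CB0 1 with hCBdef
  have hCBpos : (0:ℝ) < CB := lt_of_lt_of_le one_pos (le_max_right _ _)
  have hCB : ∀ x > (0:ℝ), S.omega p f x ≤ CB * x ^ γ := by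
    intro x hx
    refine le_trans (hCB0 x hx) ?_
    exact mul_le_mul_of_nonneg_right (le_max_left _ _) (Real.rpow_nonneg hx.le γ)
  -- basic positivity facts
  have hα2 : -(1/2 : ℝ) < S.α := lt_of_le_of_ne (le_trans S.hβ S.hβα) (Ne.symm S.hα)
  have hσpos : (0:ℝ) < 2 * (S.α + 1) := by linarith
  have h2α1 : (0:ℝ) < 2 * S.α + 1 := by linarith
  have hppos : (0:ℝ) < p := by linarith
  have hinvp : 1/p < 1 := (div_lt_one hppos).2 hp
  have hp'pos : (0:ℝ) < p' := one_div_pos.mp (by linarith)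
  have hp'ne : p' ≠ 0 := ne_of_gt hp'pos
  have hinvp' : 1/p' = (p-1)/p := by
    have h1 : 1/p' = 1 - 1/p := by linarith
    rw [h1]; field_simp
  have hDpos : (0:ℝ) < γ * p + 2 * (S.α + 1) * (p - 1) := by nlinarith
  have hspos : (0:ℝ) < s :=
    lt_trans (div_pos (by nlinarith) hDpos) hs1
  have hsp' : s / p' = s * (p - 1) / p := by
    rw [div_eq_mul_one_div, hinvp']; ring
  have hsp'nonneg : (0:ℝ) ≤ s / p' := div_nonneg hspos.le hp'pos.le
  have hsp'le : s / p' ≤ 1 := (div_le_one hp'pos).2 hs2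
  have hsD : 2 * (S.α + 1) * p < s * (γ * p + 2 * (S.α + 1) * (p - 1)) :=
    (div_lt_iff₀ hDpos).1 hs1
  set E : ℝ := -(γ * s) + 2 * (S.α + 1) * (1 - s / p') with hEdef
  have hE : E < 0 := by
    rw [hEdef, hsp']
    have key : (-(γ * s) + 2 * (S.α + 1) * (1 - s * (p - 1) / p)) * p
        = 2 * (S.α + 1) * p - s * (γ * p + 2 * (S.α + 1) * (p - 1)) := by
      field_simp; ring
    nlinarith [key]
  -- cden is nonnegative
  have hcden0 : ∀ x : ℝ, 0 ≤ S.cden x := by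
    intro x
    rcases le_or_gt (|x|) S.k with h | h
    · have h1 := (S.hcden_lo x h).1
      have h0 : (0:ℝ) ≤ S.k₁ * |x| ^ (2:ℝ) :=
        mul_nonneg S.hk₁.le (Real.rpow_nonneg (abs_nonneg x) _)
      linarith
    · have h1 := (S.hcden_hi x h).1
      have h0 : (0:ℝ) ≤ S.k₁ * |x| ^ (2*S.α+1) :=
        mul_nonneg S.hk₁.le (Real.rpow_nonneg (abs_nonneg x) _)
      linarith
  -- the weight A is nonnegative, hence wLpNorm is nonnegative
  have hA0 : ∀ x ∈ Set.Ioi (0:ℝ), (0:ℝ) ≤ S.A x := by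
    intro x hx
    rw [S.hA x (le_of_lt hx)]
    have h1 : (0:ℝ) ≤ (2:ℝ) ^ (2 * S.ρ) := Real.rpow_nonneg (by norm_num) _
    have h2 : (0:ℝ) ≤ Real.sinh x ^ (2 * S.α + 1) :=
      Real.rpow_nonneg (Real.sinh_nonneg_iff.2 (le_of_lt hx)) _
    have h3 : (0:ℝ) ≤ Real.cosh x ^ (2 * S.β + 1) :=
      Real.rpow_nonneg (Real.cosh_pos x).le _
    positivity
  have hwnonneg : ∀ q : ℝ, ∀ g : ℝ → ℂ, 0 ≤ wLpNorm S.A q g := by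
    intro q g
    apply Real.rpow_nonneg
    apply setIntegral_nonneg measurableSet_Ioi
    intro x hx
    exact mul_nonneg (Real.rpow_nonneg (norm_nonneg _) _) (hA0 x hx)
  -- measurability
  have habs : Measurable fun x => ‖S.FT f x‖ := by
    exact (S.hFT_meas f).norm
  have hcdenmeas : Measurable S.cden := S.hcden_cont.measurable
  -- dyadic annuli
  set b : ℕ → ℝ := fun n => S.k * 2 ^ (n+1) with hbdef
  have hb : ∀ n, (0:ℝ) < b n := fun n => mul_pos S.hk (by positivity)
  set An : ℕ → Set ℝ := fun n => Set.Ioi S.k ∩ Set.Ico (S.k * 2 ^ n) (S.k * 2 ^ (n+1))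
    with hAndef
  have hAnmeas : ∀ n, MeasurableSet (An n) :=
    fun n => measurableSet_Ioi.inter measurableSet_Ico
  have hAnsub : ∀ n, An n ⊆ Set.Ioi (0:ℝ) :=
    fun n x hx => lt_trans S.hk hx.1
  have hcover : Set.Ioi S.k ⊆ ⋃ n, An n := by
    intro x hx
    have hx1 : (1:ℝ) ≤ x / S.k := le_of_lt ((one_lt_div S.hk).2 hx)
    obtain ⟨n, h1, h2⟩ := exists_nat_pow_near hx1 (one_lt_two (α := ℝ))
    refine Set.mem_iUnion.2 ⟨n, hx, ?_, ?_⟩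
    · calc S.k * 2 ^ n = 2 ^ n * S.k := by ring
        _ ≤ x := (le_div_iff₀ S.hk).1 h1
    · calc x < 2 ^ (n+1) * S.k := (div_lt_iff₀ S.hk).1 h2
        _ = S.k * 2 ^ (n+1) := by ring
  -- constant for the annulus L^{p'} estimate
  set c₁ : ℝ := (4 / S.c₀) * (CH * CB) with hc₁def
  have hc₁pos : (0:ℝ) < c₁ :=
    mul_pos (div_pos four_pos S.hc₀) (mul_pos hCHpos hCBpos)
  -- Step 1: annulus L^{p'} estimate
  have key1 : ∀ n : ℕ,
      (∫⁻ x in An n, ENNReal.ofReal (‖S.FT f x‖ ^ p' * S.cden x))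
        ≤ ENNReal.ofReal ((c₁ * (b n) ^ (-γ)) ^ p') := by
    intro n
    set δ : ℝ := (b n)⁻¹ with hδdef
    have hδpos : (0:ℝ) < δ := inv_pos.2 (hb n)
    have hc4 : (0:ℝ) ≤ 4 / S.c₀ := div_nonneg (by norm_num) S.hc₀.le
    have hc4p : (0:ℝ) ≤ (4 / S.c₀) ^ p' := Real.rpow_nonneg hc4 _
    have hδγ0 : (0:ℝ) ≤ CH * (CB * δ ^ γ) :=
      mul_nonneg hCHpos.le (mul_nonneg hCBpos.le (Real.rpow_nonneg hδpos.le γ))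
    set g : ℝ → ℂ := fun y => S.τ δ f y - f y with hgdef
    have hgmem : MemW S.A p g := S.hτ_diff p hp.le δ f hf
    have hω0 : 0 ≤ wLpNorm S.A p g := hwnonneg p g
    have hωle : wLpNorm S.A p g ≤ CB * δ ^ γ := hCB δ hδpos
    have hδγ : δ ^ γ = (b n) ^ (-γ) := by
      rw [hδdef, Real.inv_rpow (hb n).le, ← Real.rpow_neg (hb n).le]
    -- the Hausdorff-Young bound for g
    have hHYg := hHY g hgmem
    have hLg : (∫⁻ lam in Set.Ioi (0:ℝ),
        ENNReal.ofReal (‖S.FT g lam‖ ^ p' * S.cden lam))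
        ≤ ENNReal.ofReal ((CH * (CB * δ ^ γ)) ^ p') := by
      have h2 := ENNReal.rpow_le_rpow hHYg hp'pos.le
      rw [← ENNReal.rpow_mul, one_div_mul_cancel hp'ne, ENNReal.rpow_one] at h2
      refine le_trans h2 ?_
      rw [ENNReal.ofReal_rpow_of_nonneg (by positivity) hp'pos.le]
      apply ENNReal.ofReal_le_ofReal
      apply Real.rpow_le_rpow (by positivity) ?_ hp'pos.le
      exact mul_le_mul_of_nonneg_left hωle hCHpos.le
    -- pointwise a.e. comparison on the annulus
    have hτ := S.hτ_FT p hp.le hp2 δ f hf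
    have hτ' : ∀ᵐ x ∂(volume.restrict (An n)),
        S.FT (S.τ δ f) x = S.φ x δ * S.FT f x :=
      ae_mono (Measure.restrict_mono (hAnsub n) le_rfl) hτ
    have hmemAn : ∀ᵐ x ∂(volume.restrict (An n)), x ∈ An n :=
      ae_restrict_mem (hAnmeas n)
    have hae : ∀ᵐ x ∂(volume.restrict (An n)),
        ENNReal.ofReal (‖S.FT f x‖ ^ p' * S.cden x)
          ≤ ENNReal.ofReal ((4 / S.c₀) ^ p')
            * ENNReal.ofReal (‖S.FT g x‖ ^ p' * S.cden x) := by
      filter_upwards [hτ', hmemAn] with x hφx hxA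
      have hxk : S.k < x := hxA.1
      have hx0 : (0:ℝ) < x := lt_trans S.hk hxk
      have hxlow : S.k * 2 ^ n ≤ x := hxA.2.1
      have hxδ : 1/2 ≤ x * δ := by
        rw [hδdef, mul_comm x, ← div_eq_inv_mul, le_div_iff₀ (hb n)]
        have hbn : (1:ℝ)/2 * b n = S.k * 2 ^ n := by
          rw [hbdef]; simp only []; rw [pow_succ]; ring
        rw [hbn]; exact hxlow
      have hmin : (1:ℝ)/4 ≤ min 1 ((x * δ) ^ 2) := by
        refine le_min (by norm_num) ?_
        nlinarith
      have hlow : S.c₀ * (1/4) ≤ ‖1 - S.φ x δ‖ :=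
        le_trans (mul_le_mul_of_nonneg_left hmin S.hc₀.le) (S.hφ_lower x δ hδpos)
      have hFg : S.FT g x = (S.φ x δ - 1) * S.FT f x := by
        rw [hgdef, S.hFT_sub (S.τ δ f) f x, hφx]; ring
      have habsg : ‖S.FT g x‖
          = ‖1 - S.φ x δ‖ * ‖S.FT f x‖ := by
        rw [hFg, norm_mul, norm_sub_rev]
      have hone : (1:ℝ) ≤ 4 / S.c₀ * ‖1 - S.φ x δ‖ := by
        rw [div_mul_eq_mul_div, le_div_iff₀ S.hc₀]
        linarith [hlow]
      have hF_le : ‖S.FT f x‖ ≤ (4 / S.c₀) * ‖S.FT g x‖ := by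
        rw [habsg, ← mul_assoc]
        calc ‖S.FT f x‖ = 1 * ‖S.FT f x‖ := (one_mul _).symm
          _ ≤ 4 / S.c₀ * ‖1 - S.φ x δ‖ * ‖S.FT f x‖ :=
            mul_le_mul_of_nonneg_right hone (norm_nonneg _)
      have hrp : ‖S.FT f x‖ ^ p'
          ≤ (4 / S.c₀) ^ p' * ‖S.FT g x‖ ^ p' := by
        rw [← Real.mul_rpow hc4 (norm_nonneg _)]
        exact Real.rpow_le_rpow (norm_nonneg _) hF_le hp'pos.le
      calc ENNReal.ofReal (‖S.FT f x‖ ^ p' * S.cden x)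
          ≤ ENNReal.ofReal ((4 / S.c₀) ^ p' * (‖S.FT g x‖ ^ p' * S.cden x)) := by
            apply ENNReal.ofReal_le_ofReal
            rw [← mul_assoc]
            exact mul_le_mul_of_nonneg_right hrp (hcden0 x)
        _ = ENNReal.ofReal ((4 / S.c₀) ^ p')
            * ENNReal.ofReal (‖S.FT g x‖ ^ p' * S.cden x) :=
            ENNReal.ofReal_mul hc4p
    calc (∫⁻ x in An n, ENNReal.ofReal (‖S.FT f x‖ ^ p' * S.cden x))
        ≤ ∫⁻ x in An n, ENNReal.ofReal ((4 / S.c₀) ^ p')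
            * ENNReal.ofReal (‖S.FT g x‖ ^ p' * S.cden x) :=
          lintegral_mono_ae hae
      _ = ENNReal.ofReal ((4 / S.c₀) ^ p')
            * ∫⁻ x in An n, ENNReal.ofReal (‖S.FT g x‖ ^ p' * S.cden x) :=
          lintegral_const_mul' _ _ ENNReal.ofReal_ne_top
      _ ≤ ENNReal.ofReal ((4 / S.c₀) ^ p')
            * ∫⁻ x in Set.Ioi (0:ℝ), ENNReal.ofReal (‖S.FT g x‖ ^ p' * S.cden x) :=
          mul_le_mul_right (lintegral_mono_set (hAnsub n)) _
      _ ≤ ENNReal.ofReal ((4 / S.c₀) ^ p') * ENNReal.ofReal ((CH * (CB * δ ^ γ)) ^ p') :=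
          mul_le_mul_right hLg _
      _ = ENNReal.ofReal ((c₁ * (b n) ^ (-γ)) ^ p') := by
          rw [← ENNReal.ofReal_mul hc4p, ← Real.mul_rpow hc4 hδγ0, hc₁def, hδγ]
          ring_nf
  -- Step 2: measure-type bound on each annulus
  have key2 : ∀ n : ℕ,
      (∫⁻ x in An n, ENNReal.ofReal (S.cden x))
        ≤ ENNReal.ofReal (S.k₂ * (b n) ^ (2 * (S.α + 1))) := by
    intro n
    have hcd : ∀ᵐ x ∂(volume.restrict (An n)),
        ENNReal.ofReal (S.cden x) ≤ ENNReal.ofReal (S.k₂ * (b n) ^ (2 * S.α + 1)) := by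
      filter_upwards [ae_restrict_mem (hAnmeas n)] with x hx
      apply ENNReal.ofReal_le_ofReal
      have hx0 : (0:ℝ) < x := lt_trans S.hk hx.1
      have hxk : S.k < |x| := by rw [abs_of_pos hx0]; exact hx.1
      have h2 := (S.hcden_hi x hxk).2
      have h3 : |x| ^ (2 * S.α + 1) ≤ (b n) ^ (2 * S.α + 1) := by
        apply Real.rpow_le_rpow (abs_nonneg x) ?_ h2α1.le
        rw [abs_of_pos hx0]; exact hx.2.2.le
      calc S.cden x ≤ S.k₂ * |x| ^ (2 * S.α + 1) := h2
        _ ≤ S.k₂ * (b n) ^ (2 * S.α + 1) := mul_le_mul_of_nonneg_left h3 S.hk₂.le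
    calc (∫⁻ x in An n, ENNReal.ofReal (S.cden x))
        ≤ ∫⁻ _ in An n, ENNReal.ofReal (S.k₂ * (b n) ^ (2 * S.α + 1)) :=
          lintegral_mono_ae hcd
      _ = ENNReal.ofReal (S.k₂ * (b n) ^ (2 * S.α + 1)) * volume (An n) :=
          setLIntegral_const _ _
      _ ≤ ENNReal.ofReal (S.k₂ * (b n) ^ (2 * S.α + 1)) * ENNReal.ofReal (b n) := by
          apply mul_le_mul_right
          have hbn : b n = S.k * 2 ^ (n+1) := rfl
          calc volume (An n) ≤ volume (Set.Ico (S.k * 2 ^ n) (S.k * 2 ^ (n+1))) :=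
                measure_mono Set.inter_subset_right
            _ = ENNReal.ofReal (S.k * 2 ^ (n+1) - S.k * 2 ^ n) := Real.volume_Ico
            _ ≤ ENNReal.ofReal (b n) := by
                apply ENNReal.ofReal_le_ofReal
                rw [hbn]
                have h0 : (0:ℝ) ≤ S.k * 2 ^ n := mul_nonneg S.hk.le (by positivity)
                linarith
      _ = ENNReal.ofReal (S.k₂ * (b n) ^ (2 * (S.α + 1))) := by
          rw [← ENNReal.ofReal_mul (mul_nonneg S.hk₂.le (Real.rpow_nonneg (hb n).le _))]
          congr 1
          rw [mul_assoc]
          congr 1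
          nth_rewrite 2 [← Real.rpow_one (b n)]
          rw [← Real.rpow_add (hb n)]
          congr 1
          ring
  -- Step 3: Hölder on each annulus
  have hsppos : (0:ℝ) < s / p' := div_pos hspos hp'pos
  have key3 : ∀ n : ℕ,
      (∫⁻ x in An n, ENNReal.ofReal (‖S.FT f x‖ ^ s * S.cden x))
        ≤ ENNReal.ofReal ((c₁ * (b n) ^ (-γ)) ^ s
            * (S.k₂ * (b n) ^ (2 * (S.α + 1))) ^ (1 - s / p')) := by
    intro n
    rcases eq_or_lt_of_le hs2 with heq | hlt
    · have h0 : 1 - s / p' = 0 := by rw [heq, div_self hp'ne]; ring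
      rw [h0, Real.rpow_zero, mul_one, heq]
      exact key1 n
    · have hθpos : (0:ℝ) < 1 - s / p' := by
        have h1 : s / p' < 1 := (div_lt_one hp'pos).2 hlt
        linarith
      have hconj : Real.HolderConjugate (p' / s) (1 - s / p')⁻¹ := by
        rw [Real.holderConjugate_iff]; constructor
        · rw [lt_div_iff₀ hspos]; linarith
        · rw [inv_inv, inv_div]; ring
      have hy0 : ∀ x : ℝ, (0:ℝ) ≤ ‖S.FT f x‖ ^ p' * S.cden x :=
        fun x => mul_nonneg (Real.rpow_nonneg (norm_nonneg _) _) (hcden0 x)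
      set u : ℝ → ENNReal := fun x =>
        ENNReal.ofReal ((‖S.FT f x‖ ^ p' * S.cden x) ^ (s / p')) with hudef
      set v : ℝ → ENNReal := fun x => ENNReal.ofReal (S.cden x ^ (1 - s / p')) with hvdef
      have humeas : Measurable u :=
        (((habs.pow measurable_const).mul hcdenmeas).pow measurable_const).ennreal_ofReal
      have hvmeas : Measurable v := (hcdenmeas.pow measurable_const).ennreal_ofReal
      have hpt : ∀ x : ℝ, ENNReal.ofReal (‖S.FT f x‖ ^ s * S.cden x) = (u * v) x := by
        intro x
        simp only [hudef, hvdef, Pi.mul_apply]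
        rw [← ENNReal.ofReal_mul (Real.rpow_nonneg (hy0 x) _)]
        congr 1
        have h1 : (‖S.FT f x‖ ^ p') ^ (s / p') = ‖S.FT f x‖ ^ s := by
          rw [← Real.rpow_mul (norm_nonneg _)]
          congr 1
          field_simp
        have h2 : S.cden x ^ (s / p') * S.cden x ^ (1 - s / p') = S.cden x := by
          rcases eq_or_lt_of_le (hcden0 x) with h0 | h0
          · rw [← h0, Real.zero_rpow (ne_of_gt hsppos), zero_mul]
          · have hsum : s / p' + (1 - s / p') = 1 := by ring
            rw [← Real.rpow_add h0, hsum, Real.rpow_one]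
        rw [Real.mul_rpow (Real.rpow_nonneg (norm_nonneg _) _) (hcden0 x), h1,
          mul_assoc, h2]
      have hu_pow : ∀ x : ℝ, u x ^ (p' / s)
          = ENNReal.ofReal (‖S.FT f x‖ ^ p' * S.cden x) := by
        intro x
        simp only [hudef]
        rw [ENNReal.ofReal_rpow_of_nonneg (Real.rpow_nonneg (hy0 x) _)
          (le_of_lt (div_pos hp'pos hspos)), ← Real.rpow_mul (hy0 x)]
        congr 1
        have h1 : s / p' * (p' / s) = 1 := by field_simp
        rw [h1, Real.rpow_one]
      have hv_pow : ∀ x : ℝ, v x ^ (1 - s / p')⁻¹ = ENNReal.ofReal (S.cden x) := by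
        intro x
        simp only [hvdef]
        rw [ENNReal.ofReal_rpow_of_nonneg (Real.rpow_nonneg (hcden0 x) _)
          (inv_nonneg.2 hθpos.le), ← Real.rpow_mul (hcden0 x)]
        congr 1
        rw [mul_inv_cancel₀ (ne_of_gt hθpos), Real.rpow_one]
      have hHld := ENNReal.lintegral_mul_le_Lp_mul_Lq (volume.restrict (An n)) hconj
        humeas.aemeasurable hvmeas.aemeasurable
      have hcb : (0:ℝ) ≤ c₁ * (b n) ^ (-γ) :=
        mul_nonneg hc₁pos.le (Real.rpow_nonneg (hb n).le _)
      have hk₂b : (0:ℝ) ≤ S.k₂ * (b n) ^ (2 * (S.α + 1)) :=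
        mul_nonneg S.hk₂.le (Real.rpow_nonneg (hb n).le _)
      calc (∫⁻ x in An n, ENNReal.ofReal (‖S.FT f x‖ ^ s * S.cden x))
          = ∫⁻ x in An n, (u * v) x := lintegral_congr hpt
        _ ≤ (∫⁻ x in An n, u x ^ (p' / s)) ^ (1 / (p' / s))
            * (∫⁻ x in An n, v x ^ (1 - s / p')⁻¹) ^ (1 / (1 - s / p')⁻¹) := hHld
        _ = (∫⁻ x in An n, ENNReal.ofReal (‖S.FT f x‖ ^ p' * S.cden x)) ^ (s / p')
            * (∫⁻ x in An n, ENNReal.ofReal (S.cden x)) ^ (1 - s / p') := by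
            rw [lintegral_congr hu_pow, lintegral_congr hv_pow, one_div_div, one_div, inv_inv]
        _ ≤ (ENNReal.ofReal ((c₁ * (b n) ^ (-γ)) ^ p')) ^ (s / p')
            * (ENNReal.ofReal (S.k₂ * (b n) ^ (2 * (S.α + 1)))) ^ (1 - s / p') :=
            mul_le_mul' (ENNReal.rpow_le_rpow (key1 n) hsp'nonneg)
              (ENNReal.rpow_le_rpow (key2 n) hθpos.le)
        _ = ENNReal.ofReal ((c₁ * (b n) ^ (-γ)) ^ s
            * (S.k₂ * (b n) ^ (2 * (S.α + 1))) ^ (1 - s / p')) := by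
            rw [ENNReal.ofReal_rpow_of_nonneg (Real.rpow_nonneg hcb _) hsp'nonneg,
              ENNReal.ofReal_rpow_of_nonneg hk₂b hθpos.le,
              ← ENNReal.ofReal_mul (Real.rpow_nonneg (Real.rpow_nonneg hcb _) _)]
            congr 2
            rw [← Real.rpow_mul hcb]
            congr 1
            field_simp
  -- Step 4: geometric decay of the annulus bounds
  set K : ℝ := c₁ ^ s * S.k₂ ^ (1 - s / p') * (2 * S.k) ^ E with hKdef
  have h2k : (0:ℝ) < 2 * S.k := by linarith [S.hk]
  have hKpos : 0 < K :=
    mul_pos (mul_pos (Real.rpow_pos_of_pos hc₁pos s) (Real.rpow_pos_of_pos S.hk₂ _))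
      (Real.rpow_pos_of_pos h2k E)
  set rr : ℝ := (2:ℝ) ^ E with hrrdef
  have hrr0 : (0:ℝ) < rr := Real.rpow_pos_of_pos two_pos E
  have hrr1 : rr < 1 := Real.rpow_lt_one_of_one_lt_of_neg one_lt_two hE
  have hTn : ∀ n : ℕ, (c₁ * (b n) ^ (-γ)) ^ s
      * (S.k₂ * (b n) ^ (2 * (S.α + 1))) ^ (1 - s / p') = K * rr ^ n := by
    intro n
    have hbn : b n = (2 * S.k) * 2 ^ n := by
      show S.k * 2 ^ (n+1) = _
      rw [pow_succ]; ring
    have h2n : (0:ℝ) < (2:ℝ) ^ n := by positivity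
    rw [Real.mul_rpow hc₁pos.le (Real.rpow_nonneg (hb n).le _),
      Real.mul_rpow S.hk₂.le (Real.rpow_nonneg (hb n).le _),
      ← Real.rpow_mul (hb n).le, ← Real.rpow_mul (hb n).le]
    have hbE : (b n) ^ (-γ * s) * (b n) ^ (2 * (S.α + 1) * (1 - s / p')) = (b n) ^ E := by
      rw [← Real.rpow_add (hb n)]
      congr 1
      rw [hEdef]; ring
    calc c₁ ^ s * (b n) ^ (-γ * s) * (S.k₂ ^ (1 - s / p') * (b n) ^ (2 * (S.α + 1) * (1 - s / p')))
        = (c₁ ^ s * S.k₂ ^ (1 - s / p'))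
            * ((b n) ^ (-γ * s) * (b n) ^ (2 * (S.α + 1) * (1 - s / p'))) := by ring
      _ = (c₁ ^ s * S.k₂ ^ (1 - s / p')) * (b n) ^ E := by rw [hbE]
      _ = K * rr ^ n := by
          rw [hKdef, hrrdef, hbn, Real.mul_rpow h2k.le h2n.le, ← Real.rpow_natCast (2:ℝ) n,
            ← Real.rpow_mul (by norm_num : (0:ℝ) ≤ 2), mul_comm (n:ℝ) E,
            Real.rpow_mul (by norm_num : (0:ℝ) ≤ 2), Real.rpow_natCast]
          ring
  -- Step 5: summing up
  set Ctot : ℝ := K * (1 - rr)⁻¹ with hCtotdef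
  have hCtotpos : 0 < Ctot := mul_pos hKpos (inv_pos.2 (by linarith))
  have htotal : (∫⁻ x in Set.Ioi S.k, ENNReal.ofReal (‖S.FT f x‖ ^ s * S.cden x))
      ≤ ENNReal.ofReal Ctot := by
    calc (∫⁻ x in Set.Ioi S.k, ENNReal.ofReal (‖S.FT f x‖ ^ s * S.cden x))
        ≤ ∫⁻ x in ⋃ n, An n, ENNReal.ofReal (‖S.FT f x‖ ^ s * S.cden x) :=
          lintegral_mono_set hcover
      _ ≤ ∑' n, ∫⁻ x in An n, ENNReal.ofReal (‖S.FT f x‖ ^ s * S.cden x) :=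
          lintegral_iUnion_le _ _
      _ ≤ ∑' n : ℕ, ENNReal.ofReal (K * rr ^ n) :=
          ENNReal.tsum_le_tsum (fun n => by rw [← hTn n]; exact key3 n)
      _ = ∑' n : ℕ, ENNReal.ofReal K * (ENNReal.ofReal rr) ^ n := by
          apply tsum_congr
          intro n
          rw [ENNReal.ofReal_mul hKpos.le, ENNReal.ofReal_pow hrr0.le]
      _ = ENNReal.ofReal K * (1 - ENNReal.ofReal rr)⁻¹ := by
          rw [ENNReal.tsum_mul_left, ENNReal.tsum_geometric]
      _ = ENNReal.ofReal Ctot := by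
          rw [hCtotdef, ENNReal.ofReal_mul hKpos.le]
          congr 1
          rw [ENNReal.ofReal_inv_of_pos (by linarith : (0:ℝ) < 1 - rr),
            ENNReal.ofReal_sub 1 hrr0.le, ENNReal.ofReal_one]
  -- conclusion
  refine ⟨Ctot, hCtotpos, ?_⟩
  intro t ht
  have h1 : (∫⁻ x in Set.Ioo S.k t, ENNReal.ofReal (‖S.FT f x‖ ^ s * S.cden x))
      ≤ ENNReal.ofReal Ctot :=
    le_trans (lintegral_mono_set Set.Ioo_subset_Ioi_self) htotal
  refine le_trans h1 (ENNReal.ofReal_le_ofReal ?_)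
  have htE : (0:ℝ) ≤ t ^ E := Real.rpow_nonneg (by linarith [S.hk]) E
  nlinarith [mul_nonneg hCtotpos.le htE]
end

section
/- Low-frequency estimate in the proof of Theorem 2 (iii): Let γ > 0 and let f belong to the Besov-type space B^{1,∞}_{γ,α} on the Jacobi hypergroup. Then there is a constant c > 0 such that for all t > 0, ∫₀^{1/t} |𝓕(f)(x)| x dx/|c(x)|² ≤ c ( t^{(γ−3)−1} + t^{γ−2(α+1)−1} ). -/
open MeasureTheory Set Filter

lemma lint_rpow_Ioo {b r : ℝ} (hb : 0 < b) (hr : -1 < r) :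
    ∫⁻ x in Set.Ioo (0:ℝ) b, ENNReal.ofReal (x ^ r) =
      ENNReal.ofReal (b ^ (r+1) / (r+1)) := by
  have hint : IntegrableOn (fun x : ℝ => x ^ r) (Set.Ioo (0:ℝ) b) :=
    ((intervalIntegrable_iff_integrableOn_Ioc_of_le hb.le).mp
      (intervalIntegral.intervalIntegrable_rpow' hr)).mono_set Set.Ioo_subset_Ioc_self
  have hnn : 0 ≤ᵐ[volume.restrict (Set.Ioo (0:ℝ) b)] fun x : ℝ => x ^ r := by
    filter_upwards [ae_restrict_mem measurableSet_Ioo] with x hx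
    exact Real.rpow_nonneg hx.1.le r
  rw [← ofReal_integral_eq_lintegral_ofReal hint hnn]
  congr 1
  rw [← integral_Ioc_eq_integral_Ioo, ← intervalIntegral.integral_of_le hb.le,
    integral_rpow (Or.inl hr), Real.zero_rpow (by linarith : r + 1 ≠ 0), sub_zero]

/-- **Low-frequency estimate in the proof of Theorem 2 (iii)**: let `γ > 0` and let
`f` belong to the Besov-type space `B^{1,∞}_{γ,α}` on the Jacobi hypergroup (i.e.
`f ∈ L¹_A(ℝ₊)` with `sup_{x>0} ω_{A,1}(f)(x)/x^γ < ∞`).  Then there is a constant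
`c > 0` such that for all `t > 0`,
`∫₀^{1/t} |𝓕(f)(x)| x dx/|c(x)|² ≤ c ( t^((γ-3)-1) + t^(γ-2(α+1)-1) )`. -/
theorem theorem_two_iii_low (S : JacobiHypergroup) (γ : ℝ) (hγ : 0 < γ)
    (f : ℝ → ℂ) (hf : MemW S.A 1 f)
    (hBesov : ∃ C : ℝ, ∀ x > (0 : ℝ), S.omega 1 f x ≤ C * x ^ γ) :
    ∃ c > (0 : ℝ), ∀ t > (0 : ℝ),
      ∫⁻ x in Set.Ioo (0 : ℝ) (1 / t),
          ENNReal.ofReal (‖S.FT f x‖ * x * S.cden x)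
        ≤ ENNReal.ofReal (c * (t ^ ((γ - 3) - 1) + t ^ (γ - 2 * (S.α + 1) - 1))) := by
  obtain ⟨C, hC⟩ := hBesov
  set C' : ℝ := max C 1 with hC'def
  have hC'pos : (0:ℝ) < C' := lt_of_lt_of_le one_pos (le_max_right _ _)
  have hc₀ := S.hc₀
  have hk₂ := S.hk₂
  have hα1 : -(1/2 : ℝ) < S.α := lt_of_le_of_ne (S.hβ.trans S.hβα) (Ne.symm S.hα)
  have h2α : (0:ℝ) < 2 * S.α + 1 := by linarith
  have h2α' : (-1:ℝ) < 2 * S.α := by linarith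
  set K : ℝ := C' * S.k₂ / S.c₀ with hK
  have hKpos : 0 < K := by positivity
  refine ⟨K * (1/2 + 1/(2*S.α+1)), by positivity, ?_⟩
  intro t ht
  set b : ℝ := 1 / t with hb
  have hbpos : 0 < b := by positivity
  have hτ := S.hτ_FT 1 le_rfl (by norm_num) t f hf
  have hτ' : ∀ᵐ x ∂(volume.restrict (Set.Ioo (0:ℝ) b)),
      S.FT (S.τ t f) x = S.φ x t * S.FT f x :=
    ae_restrict_of_ae_restrict_of_subset Set.Ioo_subset_Ioi_self hτ
  have hg : MemW S.A 1 (fun y => S.τ t f y - f y) := S.hτ_diff 1 le_rfl t f hf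
  have htγ : 0 < t ^ γ := Real.rpow_pos_of_pos ht γ
  have hωt : wLpNorm S.A 1 (fun y => S.τ t f y - f y) ≤ C' * t ^ γ := by
    calc wLpNorm S.A 1 (fun y => S.τ t f y - f y) = S.omega 1 f t := rfl
      _ ≤ C * t ^ γ := hC t ht
      _ ≤ C' * t ^ γ := mul_le_mul_of_nonneg_right (le_max_left _ _) htγ.le
  set M : ℝ := K * t ^ (γ - 2) with hM
  have hMpos : 0 < M := by positivity
  have hrpow2 : ∀ y : ℝ, y ^ (2:ℝ) = y ^ (2:ℕ) := fun y => by
    rw [← Real.rpow_natCast y 2]; norm_num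
  -- pointwise bound
  have hpt : ∀ᵐ x ∂(volume.restrict (Set.Ioo (0:ℝ) b)),
      ENNReal.ofReal (‖S.FT f x‖ * x * S.cden x) ≤
        ENNReal.ofReal (M * x ^ (1:ℝ)) + ENNReal.ofReal (M * x ^ (2*S.α)) := by
    filter_upwards [hτ', ae_restrict_mem measurableSet_Ioo] with x hx hmem
    obtain ⟨hx0, hxb⟩ := hmem
    have hxabs : |x| ≤ S.k ↔ x ≤ S.k := by rw [abs_of_pos hx0]
    have hFTg := S.hFT_sub (S.τ t f) f x
    have habs : ‖S.FT (fun y => S.τ t f y - f y) x‖ =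
        ‖1 - S.φ x t‖ * ‖S.FT f x‖ := by
      rw [hFTg, hx, show S.φ x t * S.FT f x - S.FT f x = (S.φ x t - 1) * S.FT f x by ring,
        norm_mul, norm_sub_rev]
    have hxt : x * t ≤ 1 := by
      have : x < 1 / t := hxb
      calc x * t ≤ (1/t) * t := mul_le_mul_of_nonneg_right this.le ht.le
        _ = 1 := by field_simp
    have hxt0 : 0 < x * t := mul_pos hx0 ht
    have hmin : min 1 ((x*t)^2) = (x*t)^2 := min_eq_right (by nlinarith)
    have key : S.c₀ * ((x*t)^2) * ‖S.FT f x‖ ≤ C' * t ^ γ := by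
      calc S.c₀ * ((x*t)^2) * ‖S.FT f x‖
          ≤ ‖1 - S.φ x t‖ * ‖S.FT f x‖ := by
            apply mul_le_mul_of_nonneg_right _ (norm_nonneg _)
            rw [← hmin]; exact S.hφ_lower x t ht
        _ = ‖S.FT (fun y => S.τ t f y - f y) x‖ := habs.symm
        _ ≤ wLpNorm S.A 1 (fun y => S.τ t f y - f y) := S.hFT_sup _ hg x
        _ ≤ C' * t ^ γ := hωt
    have hden : 0 < S.c₀ * (x*t)^2 := by positivity
    have hFle : ‖S.FT f x‖ ≤ C' * t ^ γ / (S.c₀ * (x*t)^2) := by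
      rw [le_div_iff₀ hden, mul_comm]; exact key
    have hcd : S.cden x ≤ S.k₂ * (x ^ (2:ℝ) + x ^ (2*S.α+1)) := by
      rcases le_or_gt x S.k with h | h
      · have h1 := (S.hcden_lo x (hxabs.mpr h)).2
        rw [abs_of_pos hx0] at h1
        have h2 : 0 ≤ x ^ (2*S.α+1) := Real.rpow_nonneg hx0.le _
        nlinarith [mul_nonneg hk₂.le h2]
      · have h1 := (S.hcden_hi x (by rwa [abs_of_pos hx0])).2
        rw [abs_of_pos hx0] at h1
        have h2 : 0 ≤ x ^ (2:ℝ) := Real.rpow_nonneg hx0.le _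
        nlinarith [mul_nonneg hk₂.le h2]
    have hcd0 : 0 ≤ S.cden x := by
      rcases le_or_gt x S.k with h | h
      · have h1 := (S.hcden_lo x (hxabs.mpr h)).1
        have h2 : 0 ≤ S.k₁ * |x| ^ (2:ℝ) :=
          mul_nonneg S.hk₁.le (Real.rpow_nonneg (abs_nonneg x) _)
        linarith
      · have h1 := (S.hcden_hi x (by rwa [abs_of_pos hx0])).1
        have h2 : 0 ≤ S.k₁ * |x| ^ (2*S.α+1) :=
          mul_nonneg S.hk₁.le (Real.rpow_nonneg (abs_nonneg x) _)
        linarith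
    have hB0 : 0 ≤ C' * t ^ γ / (S.c₀ * (x*t)^2) * x := by positivity
    have h1 : ‖S.FT f x‖ * x * S.cden x
        ≤ (C' * t ^ γ / (S.c₀ * (x*t)^2)) * x * (S.k₂ * (x ^ (2:ℝ) + x ^ (2*S.α+1))) :=
      mul_le_mul (mul_le_mul_of_nonneg_right hFle hx0.le) hcd hcd0 hB0
    have h2 : (C' * t ^ γ / (S.c₀ * (x*t)^2)) * x * (S.k₂ * (x ^ (2:ℝ) + x ^ (2*S.α+1)))
        = M * x ^ (1:ℝ) + M * x ^ (2*S.α) := by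
      rw [hM, hK, Real.rpow_sub ht, hrpow2 t, hrpow2 x,
        show x ^ (2*S.α+1) = x ^ (2*S.α) * x from by rw [Real.rpow_add hx0, Real.rpow_one],
        Real.rpow_one]
      have hxne := hx0.ne'
      have htne := ht.ne'
      have hcne := hc₀.ne'
      field_simp
    have hreal : ‖S.FT f x‖ * x * S.cden x ≤ M * x ^ (1:ℝ) + M * x ^ (2*S.α) :=
      h1.trans_eq h2
    calc ENNReal.ofReal (‖S.FT f x‖ * x * S.cden x)
        ≤ ENNReal.ofReal (M * x ^ (1:ℝ) + M * x ^ (2*S.α)) := ENNReal.ofReal_le_ofReal hreal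
      _ = ENNReal.ofReal (M * x ^ (1:ℝ)) + ENNReal.ofReal (M * x ^ (2*S.α)) :=
        ENNReal.ofReal_add (mul_nonneg hMpos.le (Real.rpow_nonneg hx0.le _))
          (mul_nonneg hMpos.le (Real.rpow_nonneg hx0.le _))
  have hmeas1 : Measurable fun x : ℝ => ENNReal.ofReal (M * x ^ (1:ℝ)) := by
    fun_prop
  have hsplit : ∀ r : ℝ, -1 < r →
      ∫⁻ x in Set.Ioo (0:ℝ) b, ENNReal.ofReal (M * x ^ r)
        = ENNReal.ofReal M * ENNReal.ofReal (b ^ (r+1) / (r+1)) := by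
    intro r hr
    simp_rw [ENNReal.ofReal_mul hMpos.le]
    rw [lintegral_const_mul' _ _ ENNReal.ofReal_ne_top, lint_rpow_Ioo hbpos hr]
  have hbr : ∀ y : ℝ, b ^ y = t ^ (-y) := fun y => by
    rw [hb, one_div, Real.inv_rpow ht.le, ← Real.rpow_neg ht.le]
  have hT1 : 0 < t ^ (γ - 2) * t ^ (-((1:ℝ)+1)) :=
    mul_pos (Real.rpow_pos_of_pos ht _) (Real.rpow_pos_of_pos ht _)
  have hT2 : 0 < t ^ (γ - 2) * t ^ (-(2*S.α+1)) :=
    mul_pos (Real.rpow_pos_of_pos ht _) (Real.rpow_pos_of_pos ht _)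
  have e1 : t ^ ((γ-3)-1) = t ^ (γ-2) * t ^ (-((1:ℝ)+1)) := by
    rw [← Real.rpow_add ht]; congr 1; ring
  have e2 : t ^ (γ - 2*(S.α+1) - 1) = t ^ (γ-2) * t ^ (-(2*S.α+1)) := by
    rw [← Real.rpow_add ht]; congr 1; ring
  have hfinal : M * (b ^ ((1:ℝ)+1) / ((1:ℝ)+1)) + M * (b ^ (2*S.α+1) / (2*S.α+1))
      ≤ K * (1/2 + 1/(2*S.α+1)) * (t ^ ((γ-3)-1) + t ^ (γ - 2*(S.α+1) - 1)) := by
    rw [hM, hbr, hbr, e1, e2]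
    have expand : K * (1/2 + 1/(2*S.α+1))
          * (t^(γ-2) * t^(-((1:ℝ)+1)) + t^(γ-2) * t^(-(2*S.α+1)))
        = K * t^(γ-2) * (t^(-((1:ℝ)+1)) / ((1:ℝ)+1))
          + K * t^(γ-2) * (t^(-(2*S.α+1)) / (2*S.α+1))
          + (K * (t^(γ-2) * t^(-(2*S.α+1))) / 2
            + K * (t^(γ-2) * t^(-((1:ℝ)+1))) / (2*S.α+1)) := by
      ring
    have hpos2 : 0 ≤ K * (t^(γ-2) * t^(-(2*S.α+1))) / 2
        + K * (t^(γ-2) * t^(-((1:ℝ)+1))) / (2*S.α+1) := by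
      have := hT1; have := hT2
      positivity
    linarith [expand, hpos2]
  calc ∫⁻ x in Set.Ioo (0:ℝ) b, ENNReal.ofReal (‖S.FT f x‖ * x * S.cden x)
      ≤ ∫⁻ x in Set.Ioo (0:ℝ) b,
          (ENNReal.ofReal (M * x ^ (1:ℝ)) + ENNReal.ofReal (M * x ^ (2*S.α))) :=
        lintegral_mono_ae hpt
    _ = (∫⁻ x in Set.Ioo (0:ℝ) b, ENNReal.ofReal (M * x ^ (1:ℝ)))
        + ∫⁻ x in Set.Ioo (0:ℝ) b, ENNReal.ofReal (M * x ^ (2*S.α)) :=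
        lintegral_add_left hmeas1 _
    _ = ENNReal.ofReal M * ENNReal.ofReal (b ^ ((1:ℝ)+1) / ((1:ℝ)+1))
        + ENNReal.ofReal M * ENNReal.ofReal (b ^ (2*S.α+1) / (2*S.α+1)) := by
        rw [hsplit 1 (by norm_num), hsplit (2*S.α) h2α']
    _ = ENNReal.ofReal (M * (b ^ ((1:ℝ)+1) / ((1:ℝ)+1)) + M * (b ^ (2*S.α+1) / (2*S.α+1))) := by
        rw [← ENNReal.ofReal_mul hMpos.le, ← ENNReal.ofReal_mul hMpos.le,
          ← ENNReal.ofReal_add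
            (mul_nonneg hMpos.le (div_nonneg (Real.rpow_nonneg hbpos.le _) (by norm_num)))
            (mul_nonneg hMpos.le (div_nonneg (Real.rpow_nonneg hbpos.le _) h2α.le))]
    _ ≤ ENNReal.ofReal (K * (1/2 + 1/(2*S.α+1)) *
          (t ^ ((γ-3)-1) + t ^ (γ - 2*(S.α+1) - 1))) := ENNReal.ofReal_le_ofReal hfinal
end
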